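/- arXiv:2103.08839 — 5 statements merged into one kernel-verified Lean document; each statement's English description precedes it below -/
import Mathlib

section
/- Let (M, Y) be a rigid cotorsion pair on C. Then H = CoCone(M, M) is closed under direct summands: if A ⊕ B belongs to H, then A belongs to H. -/
open CategoryTheory CategoryTheory.Limits Opposite

attribute [local instance] CategoryTheory.Limits.HasFiniteBiproducts.of_hasFiniteProducts

noncomputable section

universe v u

variable {C : Type u} [Category.{v} C] [Abelian C]

/-- `f`, `g` form a short exact sequence `0 ⟶ X ⟶ Y ⟶ Z ⟶ 0`. -/
def IsSES {X Y Z : C} (f : X ⟶ Y) (g : Y ⟶ Z) : Prop :=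
  ∃ w : f ≫ g = 0, (ShortComplex.mk f g w).ShortExact

/-- A morphism `f : P ⟶ A` is right minimal if every endomorphism `g` of `P`
with `f ∘ g = f` is an isomorphism. -/
def RightMinimal {P A : C} (f : P ⟶ A) : Prop :=
  ∀ g : P ⟶ P, g ≫ f = f → IsIso g

/-- A morphism `f : A ⟶ I` is left minimal if every endomorphism `g` of `I`
with `g ∘ f = f` is an isomorphism. -/
def LeftMinimal {A I : C} (f : A ⟶ I) : Prop :=
  ∀ g : I ⟶ I, f ≫ g = f → IsIso g

/-- The category `C` is Krull–Schmidt: every nonzero object is a finite direct sum of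
objects with local endomorphism rings. -/
def IsKrullSchmidt (C : Type u) [Category.{v} C] [Abelian C] : Prop :=
  ∀ A : C, ¬ IsZero A → ∃ (n : ℕ) (f : Fin n → C),
    (∀ i, IsLocalRing (End (f i))) ∧ Nonempty (A ≅ ⨁ f)

/-- A subcategory (given by a predicate on objects, i.e. a full subcategory closed
under isomorphisms) which is closed under finite direct sums and direct summands. -/
structure IsAdditiveSubcat (S : C → Prop) : Prop where
  of_iso : ∀ {X Y : C}, (X ≅ Y) → S X → S Y
  sum_mem : ∀ {X Y : C}, S X → S Y → S (X ⊞ Y)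
  summands_mem : ∀ {X Y : C}, S (X ⊞ Y) → S X ∧ S Y

section Ext

variable (k : Type*) [Field k] [Linear k C] [EnoughProjectives C]

/-- Vanishing of `Ext^n(A, B)`. -/
def extVanishes (n : ℕ) (A B : C) : Prop :=
  IsZero (((_root_.Ext k C n).obj (op A)).obj B)

/-- `(M, Y)` is a cotorsion pair: `Ext¹(M, Y) = 0` and every object admits the two
approximation short exact sequences. -/
structure IsCotorsionPair (M Y : C → Prop) : Prop where
  subcatM : IsAdditiveSubcat M
  subcatY : IsAdditiveSubcat Y
  ext_vanishes : ∀ ⦃X Z : C⦄, M X → Y Z → extVanishes k 1 X Z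
  exists_res : ∀ A : C, ∃ (Y₀ M₀ : C) (f : Y₀ ⟶ M₀) (g : M₀ ⟶ A),
      Y Y₀ ∧ M M₀ ∧ IsSES f g
  exists_cores : ∀ A : C, ∃ (Y₀ M₀ : C) (f : A ⟶ Y₀) (g : Y₀ ⟶ M₀),
      Y Y₀ ∧ M M₀ ∧ IsSES f g

/-- A rigid cotorsion pair: moreover `Ext¹(M, M') = 0`. -/
def IsRigidCotorsionPair (M Y : C → Prop) : Prop :=
  IsCotorsionPair k M Y ∧ ∀ ⦃X Z : C⦄, M X → M Z → extVanishes k 1 X Z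

/-- Membership in `CoCone(M, N)`: objects `A` admitting a short exact sequence
`0 ⟶ A ⟶ M₁ ⟶ N₂ ⟶ 0` with `M₁ ∈ M` and `N₂ ∈ N`. -/
def MemCoCone (M N : C → Prop) (A : C) : Prop :=
  ∃ (B₁ B₂ : C) (f : A ⟶ B₁) (g : B₁ ⟶ B₂), M B₁ ∧ N B₂ ∧ IsSES f g

/-- Membership in `Cone(M, N)`: objects `A` admitting a short exact sequence
`0 ⟶ M₁ ⟶ N₂ ⟶ A ⟶ 0` with `M₁ ∈ M` and `N₂ ∈ N`. -/
def MemCone (M N : C → Prop) (A : C) : Prop :=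
  ∃ (B₁ B₂ : C) (f : B₁ ⟶ B₂) (g : B₂ ⟶ A), M B₁ ∧ N B₂ ∧ IsSES f g

/-- A morphism factors through an object of the subcategory `S`. -/
def FactorsThruSubcat (S : C → Prop) {X Z : C} (u : X ⟶ Z) : Prop :=
  ∃ (Y' : C) (w : X ⟶ Y') (v : Y' ⟶ Z), S Y' ∧ w ≫ v = u

/-- `A` has no nonzero direct summand belonging to `S`. -/
def NoNonzeroSummandIn (S : C → Prop) (A : C) : Prop :=
  ∀ (B B' : C), (A ≅ B ⊞ B') → S B → IsZero B

/-- `M` is fully rigid: it fits in a rigid cotorsion pair `(M, Y)` with `M` different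
from the subcategory of projective objects, and every indecomposable object of `C`
belongs either to `Y` or to `H = CoCone(M, M)`. -/
def IsFullyRigid (M Y : C → Prop) : Prop :=
  IsRigidCotorsionPair k M Y ∧ M ≠ (fun X : C => Projective X) ∧
    ∀ A : C, Indecomposable A → Y A ∨ MemCoCone M M A

/-- `M` is `n`-rigid: `Ext^i(M, M') = 0` for all `1 ≤ i ≤ n`. -/
def IsNRigid (n : ℕ) (M : C → Prop) : Prop :=
  ∀ i, 1 ≤ i → i ≤ n → ∀ ⦃X Z : C⦄, M X → M Z → extVanishes k i X Z

/-- `M` is `d`-cluster-tilting. -/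
structure IsDClusterTilting (d : ℕ) (M : C → Prop) : Prop where
  subcatM : IsAdditiveSubcat M
  contravariantly_finite : ∀ A : C, ∃ (M₀ : C) (f : M₀ ⟶ A), M M₀ ∧
      ∀ (M' : C) (g : M' ⟶ A), M M' → ∃ h : M' ⟶ M₀, h ≫ f = g
  covariantly_finite : ∀ A : C, ∃ (M₀ : C) (f : A ⟶ M₀), M M₀ ∧
      ∀ (M' : C) (g : A ⟶ M'), M M' → ∃ h : M₀ ⟶ M', f ≫ h = g
  mem_iff_ext_right : ∀ X : C, M X ↔
      ∀ i, 1 ≤ i → i ≤ d - 1 → ∀ ⦃M₀ : C⦄, M M₀ → extVanishes k i X M₀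
  mem_iff_ext_left : ∀ X : C, M X ↔
      ∀ i, 1 ≤ i → i ≤ d - 1 → ∀ ⦃M₀ : C⦄, M M₀ → extVanishes k i M₀ X

/-- The subcategories `M_l`: `M₀ = M` and `M_l = CoCone(M, M_{l-1})`. -/
def MSeq (M : C → Prop) : ℕ → C → Prop
  | 0 => M
  | l + 1 => MemCoCone M (MSeq M l)

end Ext

/-- `Ext¹(X, Z) = 0`, expressed by the splitting of all short exact sequences
`0 ⟶ Z ⟶ E ⟶ X ⟶ 0`. -/
def Ext1Vanishes (X Z : C) : Prop :=
  ∀ (E : C) (f : Z ⟶ E) (g : E ⟶ X), IsSES f g → ∃ s : X ⟶ E, s ≫ g = 𝟙 X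



section Helpers

open ZeroObject Module

open Polynomial in
lemma exists_idempotent_comp_eq {k : Type*} [Field k] [Linear k C] {A X : C}
    (hfin : Module.Finite k (X ⟶ X))
    (f₀ : A ⟶ X) (hf₀ : f₀ ≠ 0) (g : X ⟶ X) (hg : ¬ IsIso g) (hfg : f₀ ≫ g = f₀) :
    ∃ e : X ⟶ X, e ≫ e = e ∧ f₀ ≫ e = f₀ ∧ e ≠ 𝟙 X := by
  have hfinE : Module.Finite k (End X) := hfin
  let G : End X := g
  have hint : IsIntegral k G := (Algebra.IsIntegral.of_finite k (End X)).isIntegral G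
  have halg : ∀ c : k, (algebraMap k (End X) c) = c • (𝟙 X) := fun c => rfl
  have hpow : ∀ n : ℕ, f₀ ≫ (G ^ n : End X) = f₀ := by
    intro n
    induction n with
    | zero => show f₀ ≫ (1 : End X) = f₀; rw [End.one_def, Category.comp_id]
    | succ n ih =>
      rw [pow_succ, End.mul_def]
      show f₀ ≫ (g ≫ _) = f₀
      rw [← Category.assoc, hfg, ih]
  have haeval : ∀ p : k[X], f₀ ≫ (aeval G p : End X) = p.eval 1 • f₀ := by
    intro p
    induction p using Polynomial.induction_on' with
    | add p q hp hq =>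
      rw [map_add, eval_add, add_smul, ← hp, ← hq]
      exact Preadditive.comp_add _ _ _ _ _ _
    | monomial n c =>
      rw [aeval_monomial, eval_monomial, one_pow, End.mul_def, halg]
      show f₀ ≫ ((G ^ n : End X) ≫ (c • 𝟙 X)) = _
      rw [← Category.assoc, hpow n, Linear.comp_smul, Category.comp_id, mul_smul, one_smul]
  have hcomm : ∀ q : k[X], (aeval G q : End X) * G = G * aeval G q := by
    intro q
    have h1 : aeval G (q * Polynomial.X) = aeval G q * G := by rw [map_mul, aeval_X]
    have h2 : aeval G (Polynomial.X * q) = G * aeval G q := by rw [map_mul, aeval_X]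
    rw [← h1, mul_comm q Polynomial.X, h2]
  set p := minpoly k G with hpdef
  have hpne : p ≠ 0 := minpoly.ne_zero hint
  have hp0 : (aeval G p : End X) = 0 := minpoly.aeval k G
  have heval1 : p.eval 1 = 0 := by
    have h1 : f₀ ≫ (aeval G p : End X) = p.eval 1 • f₀ := haeval p
    rw [hp0] at h1
    have h2 : f₀ ≫ (0 : End X) = (0 : A ⟶ X) := Limits.comp_zero
    rw [h2] at h1
    by_contra hc
    apply hf₀
    calc f₀ = (p.eval 1)⁻¹ • ((p.eval 1) • f₀) := by
              rw [smul_smul, inv_mul_cancel₀ hc, one_smul]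
      _ = 0 := by rw [← h1, smul_zero]
  have hiso : ∀ q : k[X], (aeval G q : End X) * G = 1 → False := by
    intro q hq1
    refine hg ⟨aeval G q, ?_, ?_⟩
    · rw [← End.one_def, ← hq1, End.mul_def]
    · rw [← End.one_def, ← hq1, hcomm, End.mul_def]
  have hcoeff0 : p.coeff 0 = 0 := by
    by_contra hc
    apply hiso ((- (p.coeff 0)⁻¹) • p.divX)
    have h3 := p.X_mul_divX_add
    apply_fun (aeval G) at h3
    rw [map_add, map_mul, aeval_X, aeval_C, hp0] at h3
    have h4 : G * aeval G p.divX = (-(p.coeff 0)) • (1 : End X) := by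
      rw [neg_smul, End.one_def, ← halg, eq_neg_iff_add_eq_zero, h3]
    rw [map_smul, smul_mul_assoc, hcomm, h4, smul_smul, neg_mul_neg,
      inv_mul_cancel₀ hc, one_smul]
  -- now X ∣ p
  set s := p.rootMultiplicity 0 with hsdef
  have hs : 0 < s := by
    rw [hsdef]
    rw [rootMultiplicity_pos hpne]
    rwa [IsRoot.def, ← coeff_zero_eq_eval_zero]
  clear_value s
  have hdvd : (Polynomial.X : k[X]) ^ s ∣ p := by
    rw [hsdef]
    simpa using pow_rootMultiplicity_dvd p 0
  obtain ⟨q, hq⟩ := hdvd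
  have hXq : ¬ (Polynomial.X : k[X]) ∣ q := by
    rintro ⟨r, rfl⟩
    apply pow_rootMultiplicity_not_dvd hpne (0 : k)
    refine ⟨r, ?_⟩
    rw [← hsdef]
    simpa [pow_succ, mul_assoc] using hq
  have hcop : IsCoprime q ((Polynomial.X : k[X]) ^ s) :=
    Polynomial.irreducible_X.coprime_pow_of_not_dvd s hXq
  obtain ⟨b, a, hab⟩ := hcop
  -- b * q + a * X ^ s = 1
  have hq1 : q.eval 1 = 0 := by
    have := heval1
    rw [hq, eval_mul, eval_pow, eval_X, one_pow, one_mul] at this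
    exact this
  have ha1 : a.eval 1 = 1 := by
    have := congrArg (Polynomial.eval 1) hab
    rw [eval_add, eval_mul, eval_mul, eval_pow, eval_X, hq1, mul_zero, zero_add,
      one_pow, mul_one, eval_one] at this
    exact this
  refine ⟨aeval G (a * Polynomial.X ^ s), ?_, ?_, ?_⟩
  · -- idempotent
    show (aeval G (a * Polynomial.X ^ s) : End X) ≫ _ = _
    have hmul : (aeval G (a * Polynomial.X ^ s) : End X) * aeval G (a * Polynomial.X ^ s)
        = aeval G (a * Polynomial.X ^ s) := by
      rw [← map_mul]
      have hpoly : (a * Polynomial.X ^ s) * (a * Polynomial.X ^ s)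
          = a * Polynomial.X ^ s + (-(a * b)) * p := by
        rw [hq]; linear_combination (a * Polynomial.X ^ s) * hab
      rw [hpoly, map_add]
      rw [show (aeval G) (-(a * b) * p) = (aeval G) (-(a * b)) * (aeval G) p from map_mul _ _ _]
      rw [hp0, mul_zero, add_zero]
    calc (aeval G (a * Polynomial.X ^ s) : End X) ≫ aeval G (a * Polynomial.X ^ s)
        = (aeval G (a * Polynomial.X ^ s) : End X) * aeval G (a * Polynomial.X ^ s) := by
          rw [End.mul_def]
      _ = _ := hmul
  · rw [haeval, eval_mul, eval_pow, eval_X, one_pow, mul_one, ha1, one_smul]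
  · -- not identity
    intro he
    obtain ⟨s', rfl⟩ : ∃ s', s = s' + 1 := ⟨s - 1, (Nat.succ_pred_eq_of_pos hs).symm⟩
    apply hiso (a * Polynomial.X ^ s')
    have : aeval G (a * Polynomial.X ^ s' * Polynomial.X) = 1 := by
      rw [mul_assoc, ← pow_succ]
      rw [show (aeval G (a * Polynomial.X ^ (s' + 1)) : End X) = 𝟙 X from he, End.one_def]
    rw [map_mul (aeval G) (a * Polynomial.X ^ s') Polynomial.X, aeval_X] at this
    exact this

lemma biprod_decomp_of_idempotent {X : C} (e : X ⟶ X) (he : e ≫ e = e) :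
    ∃ (N N' : C) (φ : X ≅ N ⊞ N'),
      e = φ.hom ≫ biprod.fst ≫ biprod.inl ≫ φ.inv := by
  have h1 : e ≫ (𝟙 X - e) = 0 := by simp [Preadditive.comp_sub, he]
  have h2 : (𝟙 X - e) ≫ e = 0 := by simp [Preadditive.sub_comp, he]
  refine ⟨kernel (𝟙 X - e), kernel e, ?_, ?_⟩
  · -- the iso
    refine ⟨biprod.lift (kernel.lift (𝟙 X - e) e h1) (kernel.lift e (𝟙 X - e) h2),
      biprod.desc (kernel.ι (𝟙 X - e)) (kernel.ι e), ?_, ?_⟩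
    · rw [biprod.lift_desc, kernel.lift_ι, kernel.lift_ι]
      simp
    · have hι₁e : kernel.ι (𝟙 X - e) ≫ e = kernel.ι (𝟙 X - e) := by
        have := kernel.condition (𝟙 X - e)
        rw [Preadditive.comp_sub, Category.comp_id, sub_eq_zero] at this
        exact this.symm
      have hι₂e : kernel.ι e ≫ e = 0 := kernel.condition e
      apply biprod.hom_ext'
      · rw [biprod.inl_desc_assoc, Category.comp_id]
        apply biprod.hom_ext
        · rw [Category.assoc, biprod.lift_fst, biprod.inl_fst]
          rw [← cancel_mono (kernel.ι (𝟙 X - e)), Category.assoc, kernel.lift_ι, hι₁e]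
          simp
        · rw [Category.assoc, biprod.lift_snd, biprod.inl_snd]
          rw [← cancel_mono (kernel.ι e), Category.assoc, kernel.lift_ι, zero_comp,
            Preadditive.comp_sub, Category.comp_id, hι₁e, sub_self]
      · rw [biprod.inr_desc_assoc, Category.comp_id]
        apply biprod.hom_ext
        · rw [Category.assoc, biprod.lift_fst, biprod.inr_fst]
          rw [← cancel_mono (kernel.ι (𝟙 X - e)), Category.assoc, kernel.lift_ι, zero_comp,
            hι₂e]
        · rw [Category.assoc, biprod.lift_snd, biprod.inr_snd]
          rw [← cancel_mono (kernel.ι e), Category.assoc, kernel.lift_ι,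
            Preadditive.comp_sub, Category.comp_id, hι₂e, sub_zero]
          simp
  · dsimp
    rw [biprod.lift_fst_assoc, biprod.inl_desc, kernel.lift_ι]

lemma finrank_lt_of_iso_biprod (k : Type*) [Field k] [Linear k C]
    (hfin : ∀ X Y : C, Module.Finite k (X ⟶ Y)) {X N N' : C} (φ : X ≅ N ⊞ N')
    (hN' : ¬ IsZero N') :
    finrank k (N ⟶ N) < finrank k (X ⟶ X) := by
  have := hfin X X
  have := hfin N N
  have := hfin N' N'
  let Φ : (N ⟶ N) →ₗ[k] (X ⟶ X) :=
    { toFun := fun h => φ.hom ≫ biprod.fst ≫ h ≫ biprod.inl ≫ φ.inv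
      map_add' := by
        intro a b
        simp [Preadditive.comp_add, Preadditive.add_comp]
      map_smul' := by
        intro c a
        simp [Linear.comp_smul, Linear.smul_comp] }
  let Φ' : (N' ⟶ N') →ₗ[k] (X ⟶ X) :=
    { toFun := fun h => φ.hom ≫ biprod.snd ≫ h ≫ biprod.inr ≫ φ.inv
      map_add' := by
        intro a b
        simp [Preadditive.comp_add, Preadditive.add_comp]
      map_smul' := by
        intro c a
        simp [Linear.comp_smul, Linear.smul_comp] }
  have hrec : ∀ h : N ⟶ N, (biprod.inl ≫ φ.inv) ≫ (Φ h) ≫ (φ.hom ≫ biprod.fst) = h := by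
    intro h
    simp [Φ]
  have hrec' : ∀ h : N' ⟶ N', (biprod.inr ≫ φ.inv) ≫ (Φ' h) ≫ (φ.hom ≫ biprod.snd) = h := by
    intro h
    simp [Φ']
  have hinj : Function.Injective Φ := by
    intro a b hab
    rw [← hrec a, ← hrec b, hab]
  have hinj' : Function.Injective Φ' := by
    intro a b hab
    rw [← hrec' a, ← hrec' b, hab]
  have hdisj : LinearMap.range Φ ⊓ LinearMap.range Φ' = ⊥ := by
    rw [eq_bot_iff]
    rintro x ⟨⟨h, rfl⟩, ⟨h', hh'⟩⟩
    have : h = 0 := by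
      rw [← hrec h, ← hh']
      simp [Φ']
    simp only [Submodule.mem_bot]
    rw [this, map_zero]
  have key := Submodule.finrank_sup_add_finrank_inf_eq (LinearMap.range Φ) (LinearMap.range Φ')
  rw [hdisj, finrank_bot, add_zero] at key
  have h1 : finrank k (LinearMap.range Φ) = finrank k (N ⟶ N) :=
    LinearMap.finrank_range_of_inj hinj
  have h2 : finrank k (LinearMap.range Φ') = finrank k (N' ⟶ N') :=
    LinearMap.finrank_range_of_inj hinj'
  have h3 : 0 < finrank k (N' ⟶ N') := by
    rw [finrank_pos_iff]
    refine ⟨𝟙 N', 0, ?_⟩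
    rw [IsZero.iff_id_eq_zero] at hN'
    exact hN'
  have h4 : finrank k (↥(LinearMap.range Φ ⊔ LinearMap.range Φ')) ≤ finrank k (X ⟶ X) :=
    Submodule.finrank_le _
  omega

lemma leftMinimal_biprod_map {A B NA NB : C} {a : A ⟶ NA} {b : B ⟶ NB}
    (ha : LeftMinimal a) (hb : LeftMinimal b) : LeftMinimal (biprod.map a b) := by
  intro h hh
  have e1 : (a ≫ biprod.inl) ≫ h = a ≫ biprod.inl := by
    calc (a ≫ biprod.inl) ≫ h = biprod.inl ≫ biprod.map a b ≫ h := by simp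
      _ = biprod.inl ≫ biprod.map a b := by rw [hh]
      _ = a ≫ biprod.inl := by simp
  have e2 : (b ≫ biprod.inr) ≫ h = b ≫ biprod.inr := by
    calc (b ≫ biprod.inr) ≫ h = biprod.inr ≫ biprod.map a b ≫ h := by simp
      _ = biprod.inr ≫ biprod.map a b := by rw [hh]
      _ = b ≫ biprod.inr := by simp
  set h₁₁ : NA ⟶ NA := biprod.inl ≫ h ≫ biprod.fst with hdef11
  set h₁₂ : NA ⟶ NB := biprod.inl ≫ h ≫ biprod.snd with hdef12
  set h₂₁ : NB ⟶ NA := biprod.inr ≫ h ≫ biprod.fst with hdef21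
  set h₂₂ : NB ⟶ NB := biprod.inr ≫ h ≫ biprod.snd with hdef22
  have e11 : a ≫ h₁₁ = a := by
    rw [hdef11]
    calc a ≫ biprod.inl ≫ h ≫ biprod.fst = ((a ≫ biprod.inl) ≫ h) ≫ biprod.fst := by simp
      _ = (a ≫ biprod.inl) ≫ biprod.fst := by rw [e1]
      _ = a := by simp
  have e12 : a ≫ h₁₂ = 0 := by
    rw [hdef12]
    calc a ≫ biprod.inl ≫ h ≫ biprod.snd = ((a ≫ biprod.inl) ≫ h) ≫ biprod.snd := by simp
      _ = (a ≫ biprod.inl) ≫ biprod.snd := by rw [e1]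
      _ = 0 := by simp
  have e21 : b ≫ h₂₁ = 0 := by
    rw [hdef21]
    calc b ≫ biprod.inr ≫ h ≫ biprod.fst = ((b ≫ biprod.inr) ≫ h) ≫ biprod.fst := by simp
      _ = (b ≫ biprod.inr) ≫ biprod.fst := by rw [e2]
      _ = 0 := by simp
  have e22 : b ≫ h₂₂ = b := by
    rw [hdef22]
    calc b ≫ biprod.inr ≫ h ≫ biprod.snd = ((b ≫ biprod.inr) ≫ h) ≫ biprod.snd := by simp
      _ = (b ≫ biprod.inr) ≫ biprod.snd := by rw [e2]
      _ = b := by simp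
  have hi11 : IsIso h₁₁ := ha _ e11
  set h₂₂' : NB ⟶ NB := h₂₂ - h₂₁ ≫ inv h₁₁ ≫ h₁₂ with hdef22'
  have e22' : b ≫ h₂₂' = b := by
    rw [hdef22', Preadditive.comp_sub, e22, ← Category.assoc, e21, zero_comp, sub_zero]
  have hi22 : IsIso h₂₂' := hb _ e22'
  set x : NA ⊞ NB ⟶ NA ⊞ NB := biprod.snd ≫ (h₂₁ ≫ inv h₁₁) ≫ biprod.inl with hxdef
  set y : NA ⊞ NB ⟶ NA ⊞ NB := biprod.fst ≫ (inv h₁₁ ≫ h₁₂) ≫ biprod.inr with hydef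
  have hx : x ≫ x = 0 := by
    rw [hxdef]
    rw [show (biprod.snd ≫ (h₂₁ ≫ inv h₁₁) ≫ biprod.inl : NA ⊞ NB ⟶ NA ⊞ NB) ≫
        biprod.snd ≫ (h₂₁ ≫ inv h₁₁) ≫ biprod.inl
      = biprod.snd ≫ (h₂₁ ≫ inv h₁₁) ≫ (biprod.inl ≫ biprod.snd) ≫
        (h₂₁ ≫ inv h₁₁) ≫ biprod.inl from by simp only [Category.assoc]]
    simp
  have hy : y ≫ y = 0 := by
    rw [hydef]
    rw [show (biprod.fst ≫ (inv h₁₁ ≫ h₁₂) ≫ biprod.inr : NA ⊞ NB ⟶ NA ⊞ NB) ≫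
        biprod.fst ≫ (inv h₁₁ ≫ h₁₂) ≫ biprod.inr
      = biprod.fst ≫ (inv h₁₁ ≫ h₁₂) ≫ (biprod.inr ≫ biprod.fst) ≫
        (inv h₁₁ ≫ h₁₂) ≫ biprod.inr from by simp only [Category.assoc]]
    simp
  have hLiso : IsIso (𝟙 (NA ⊞ NB) + x) := by
    refine ⟨𝟙 _ - x, ?_, ?_⟩ <;>
    · simp only [Preadditive.add_comp, Preadditive.sub_comp, Preadditive.comp_sub,
        Preadditive.comp_add, Category.id_comp, Category.comp_id, hx]
      abel
  have hUiso : IsIso (𝟙 (NA ⊞ NB) + y) := by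
    refine ⟨𝟙 _ - y, ?_, ?_⟩ <;>
    · simp only [Preadditive.add_comp, Preadditive.sub_comp, Preadditive.comp_sub,
        Preadditive.comp_add, Category.id_comp, Category.comp_id, hy]
      abel
  have heq : h = (𝟙 _ + x) ≫ biprod.map h₁₁ h₂₂' ≫ (𝟙 _ + y) := by
    apply biprod.hom_ext' <;> apply biprod.hom_ext <;>
    · rw [hxdef, hydef, hdef22']
      simp [Preadditive.add_comp, Preadditive.comp_add, Preadditive.sub_comp,
        Preadditive.comp_sub, hdef11, hdef12, hdef21, hdef22]
  have hD : IsIso (biprod.map h₁₁ h₂₂') := by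
    rw [show biprod.map h₁₁ h₂₂' = (biprod.mapIso (asIso h₁₁) (asIso h₂₂')).hom from rfl]
    infer_instance
  rw [heq]
  infer_instance

lemma exists_left_minimal_version (k : Type*) [Field k] [Linear k C]
    (hfin : ∀ X Y : C, Module.Finite k (X ⟶ Y)) {A : C} (X : C) (f₀ : A ⟶ X) :
    ∃ (N N' : C) (φ : X ≅ N ⊞ N') (f : A ⟶ N),
      f₀ ≫ φ.hom = biprod.lift f 0 ∧ LeftMinimal f := by
  suffices H : ∀ (n : ℕ) (X : C) (f₀ : A ⟶ X), finrank k (X ⟶ X) = n →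
      ∃ (N N' : C) (φ : X ≅ N ⊞ N') (f : A ⟶ N),
        f₀ ≫ φ.hom = biprod.lift f 0 ∧ LeftMinimal f by
    exact H _ X f₀ rfl
  intro n
  induction n using Nat.strong_induction_on with
  | _ n ih =>
    intro X f₀ hrank
    by_cases hmin : LeftMinimal f₀
    · -- f₀ is already minimal
      refine ⟨X, 0, ⟨biprod.lift (𝟙 X) 0, biprod.fst, by simp, ?_⟩, f₀,
        by apply biprod.hom_ext <;> simp, hmin⟩
      apply biprod.hom_ext
      · simp
      · apply (isZero_zero C).eq_of_tgt
    · by_cases hz : f₀ = 0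
      · -- f₀ = 0
        refine ⟨0, X, ⟨biprod.lift 0 (𝟙 X), biprod.snd, by simp, ?_⟩, 0, ?_, ?_⟩
        · apply biprod.hom_ext
          · apply (isZero_zero C).eq_of_tgt
          · simp
        · subst hz
          rw [zero_comp]
          apply biprod.hom_ext
          · apply (isZero_zero C).eq_of_tgt
          · simp
        · intro h _
          have : h = 𝟙 (0 : C) := (isZero_zero C).eq_of_src _ _
          rw [this]
          infer_instance
      · -- get a non-iso endomorphism fixing f₀
        simp only [LeftMinimal, not_forall] at hmin
        obtain ⟨g, hfg, hg⟩ := hmin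
        obtain ⟨e, hee, hfe, hne⟩ := exists_idempotent_comp_eq (hfin X X) f₀ hz g hg hfg
        obtain ⟨N₁, N₁', φ₁, he⟩ := biprod_decomp_of_idempotent e hee
        have hN₁' : ¬ IsZero N₁' := by
          intro hiszero
          apply hne
          have hinr : (biprod.inr : N₁' ⟶ N₁ ⊞ N₁') = 0 := hiszero.eq_of_src _ _
          have h5 : (biprod.fst ≫ biprod.inl : N₁ ⊞ N₁' ⟶ N₁ ⊞ N₁') = 𝟙 _ := by
            rw [← biprod.total, hinr]
            simp
          rw [he, show biprod.fst ≫ biprod.inl ≫ φ₁.inv = φ₁.inv from by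
            rw [← Category.assoc, h5, Category.id_comp]]
          simp
        have hsnd : f₀ ≫ φ₁.hom ≫ biprod.snd = 0 := by
          have : f₀ ≫ φ₁.hom = f₀ ≫ φ₁.hom ≫ biprod.fst ≫ biprod.inl := by
            conv_lhs => rw [← hfe, he]
            simp
          rw [reassoc_of% this]
          simp
        have hlt : finrank k (N₁ ⟶ N₁) < n := by
          rw [← hrank]
          exact finrank_lt_of_iso_biprod k hfin φ₁ hN₁'
        obtain ⟨N, N'', φ₂, f, hf, hfmin⟩ :=
          ih _ hlt N₁ (f₀ ≫ φ₁.hom ≫ biprod.fst) rfl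
        refine ⟨N, N'' ⊞ N₁',
          φ₁ ≪≫ biprod.mapIso φ₂ (Iso.refl N₁') ≪≫ biprod.associator N N'' N₁', f, ?_, hfmin⟩
        have hdecomp : f₀ ≫ φ₁.hom = biprod.lift (f₀ ≫ φ₁.hom ≫ biprod.fst) 0 := by
          apply biprod.hom_ext
          · simp
          · simpa using hsnd
        rw [Iso.trans_hom, Iso.trans_hom]
        have stepA : f₀ ≫ φ₁.hom ≫ (biprod.mapIso φ₂ (Iso.refl N₁')).hom
            = biprod.lift (biprod.lift f 0) 0 := by
          rw [← Category.assoc, hdecomp]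
          apply biprod.hom_ext
          · simp [← hf]
          · simp
        have hassoc : f₀ ≫ (φ₁.hom ≫ ((biprod.mapIso φ₂ (Iso.refl N₁')).hom ≫
              (biprod.associator N N'' N₁').hom))
            = (f₀ ≫ φ₁.hom ≫ (biprod.mapIso φ₂ (Iso.refl N₁')).hom) ≫
              (biprod.associator N N'' N₁').hom := by
          simp only [Category.assoc]
        rw [hassoc, stepA]
        apply biprod.hom_ext
        · simp
        · apply biprod.hom_ext <;> simp

lemma retraction_of_extVanishes (k : Type*) [Field k] [Linear k C] [EnoughProjectives C]
    {N P Q : C} {j : N ⟶ P} {q : P ⟶ Q} (w : j ≫ q = 0)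
    (hS : (ShortComplex.mk j q w).ShortExact) (hext : extVanishes k 1 Q N) :
    ∃ r : P ⟶ N, j ≫ r = 𝟙 N := by
  have hmono : Mono j := hS.mono_f
  have hepi : Epi q := hS.epi_g
  set res := ProjectiveResolution.of Q with hres
  set K := res.complex.linearYonedaObj k N with hK
  have hzero : IsZero (K.homology 1) := IsZero.of_iso hext (res.isoExt (R := k) 1 N).symm
  have hexact : K.ExactAt 1 := (HomologicalComplex.exactAt_iff_isZero_homology _ _).2 hzero
  rw [HomologicalComplex.exactAt_iff' _ 0 1 2 (by simp) (by simp)] at hexact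
  rw [ShortComplex.moduleCat_exact_iff] at hexact
  -- the augmentation
  set π₀ : res.complex.X 0 ⟶ Q := res.π.f 0 with hπ₀
  have hepi₀ : Epi π₀ := (inferInstance : Epi (res.π.f 0))
  -- lift along q using projectivity
  set t : res.complex.X 0 ⟶ P := Projective.factorThru π₀ q with ht
  have htq : t ≫ q = π₀ := Projective.factorThru_comp _ _
  have hd1t : (res.complex.d 1 0 ≫ t) ≫ q = 0 := by
    rw [Category.assoc, htq, hπ₀]
    exact res.complex_d_comp_π_f_zero
  -- factor through the kernel N
  set φ : res.complex.X 1 ⟶ N := hS.exact.lift (res.complex.d 1 0 ≫ t) hd1t with hφ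
  have hφj : φ ≫ j = res.complex.d 1 0 ≫ t := hS.exact.lift_f _ _
  have hcocycle : res.complex.d 2 1 ≫ φ = 0 := by
    rw [← cancel_mono j, Category.assoc, hφj, zero_comp, ← Category.assoc]
    rw [HomologicalComplex.d_comp_d]
    simp
  -- φ is a cocycle in K
  have hKd : K.d 1 2 (show (K.X 1 : Type _) from φ) = 0 := by
    show res.complex.d 2 1 ≫ φ = 0
    exact hcocycle
  obtain ⟨ψ, hψ⟩ := hexact (show ((K.sc' 0 1 2).X₂ : Type _) from φ) hKd
  have hψ' : res.complex.d 1 0 ≫ (show res.complex.X 0 ⟶ N from ψ) = φ := hψ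
  -- corrected lift
  set t' : res.complex.X 0 ⟶ P := t - (show res.complex.X 0 ⟶ N from ψ) ≫ j with ht'
  have hd1t' : res.complex.d 1 0 ≫ t' = 0 := by
    rw [ht', Preadditive.comp_sub, ← Category.assoc, hψ', hφj, sub_self]
  -- factor through the cokernel Q
  set s : Q ⟶ P := res.isColimitCokernelCofork.desc (CokernelCofork.ofπ t' hd1t') with hs
  have hπ₀s : π₀ ≫ s = t' := res.isColimitCokernelCofork.fac _ WalkingParallelPair.one
  have hsq : s ≫ q = 𝟙 Q := by
    rw [← cancel_epi π₀, ← Category.assoc, hπ₀s, Category.comp_id, ht',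
      Preadditive.sub_comp, Category.assoc, w, Limits.comp_zero, sub_zero, htq]
  -- turn the section into a retraction
  exact ⟨(ShortComplex.Splitting.ofExactOfSection _ hS.exact s hsq hmono).r,
    (ShortComplex.Splitting.ofExactOfSection _ hS.exact s hsq hmono).f_r⟩

lemma lift_of_extVanishes (k : Type*) [Field k] [Linear k C] [EnoughProjectives C]
    {S E Q N : C} {f : S ⟶ E} {g : E ⟶ Q} (w : f ≫ g = 0)
    (hS : (ShortComplex.mk f g w).ShortExact) (hext : extVanishes k 1 Q N) (u : S ⟶ N) :
    ∃ v : E ⟶ N, f ≫ v = u := by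
  have hmono : Mono f := hS.mono_f
  have hepi : Epi g := hS.epi_g
  set δ : S ⟶ E ⊞ N := biprod.lift f (-u) with hδ
  have hmonoδ : Mono δ := by
    rw [Preadditive.mono_iff_cancel_zero]
    intro Z t ht
    have : t ≫ f = 0 := by
      have := ht =≫ biprod.fst
      simpa [hδ] using this
    exact (Preadditive.mono_iff_cancel_zero f).1 hmono _ t this
  have hSδ : (ShortComplex.mk δ (cokernel.π δ) (cokernel.condition δ)).ShortExact :=
    { exact := ShortComplex.exact_of_g_is_cokernel _ (cokernelIsCokernel δ)
      mono_f := hmonoδ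
      epi_g := inferInstance }
  set jE : E ⟶ cokernel δ := biprod.inl ≫ cokernel.π δ with hjE
  set jN : N ⟶ cokernel δ := biprod.inr ≫ cokernel.π δ with hjN
  have hcomm : f ≫ jE = u ≫ jN := by
    have h0 : biprod.lift f (-u) ≫ cokernel.π δ = 0 := cokernel.condition δ
    rw [biprod.lift_eq, Preadditive.add_comp, Preadditive.neg_comp, Preadditive.neg_comp,
      add_neg_eq_zero] at h0
    rw [hjE, hjN, ← Category.assoc, ← Category.assoc]
    exact h0
  have hq0 : δ ≫ biprod.desc g 0 = 0 := by
    rw [hδ, biprod.lift_desc, w, Preadditive.neg_comp, Limits.comp_zero, neg_zero, add_zero]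
  set q : cokernel δ ⟶ Q := cokernel.desc δ (biprod.desc g 0) hq0 with hqdef
  have hπq : cokernel.π δ ≫ q = biprod.desc g 0 := cokernel.π_desc _ _ _
  have hjEq : jE ≫ q = g := by
    rw [hjE, Category.assoc, hπq, biprod.inl_desc]
  have hjNq : jN ≫ q = 0 := by
    rw [hjN, Category.assoc, hπq, biprod.inr_desc]
  have hepiq : Epi q := by
    have : Epi (jE ≫ q) := by rw [hjEq]; exact hepi
    exact epi_of_epi jE q
  have hmonojN : Mono jN := by
    rw [Preadditive.mono_iff_cancel_zero]
    intro Z t ht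
    have hfac : (t ≫ biprod.inr) ≫ cokernel.π δ = 0 := by
      rw [Category.assoc]; exact ht
    set s₀ := hSδ.exact.lift (t ≫ biprod.inr) hfac with hs₀
    have hs₀δ : s₀ ≫ δ = t ≫ biprod.inr := hSδ.exact.lift_f _ _
    have hs₀f : s₀ ≫ f = 0 := by
      have := hs₀δ =≫ biprod.fst
      simpa [hδ] using this
    have hs₀0 : s₀ = 0 := (Preadditive.mono_iff_cancel_zero f).1 hmono _ s₀ hs₀f
    have h5 : t ≫ (biprod.inr : N ⟶ E ⊞ N) = 0 := by rw [← hs₀δ, hs₀0, zero_comp]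
    have := h5 =≫ biprod.snd
    simpa using this
  have hwjN : jN ≫ q = 0 := hjNq
  have hexactjN : (ShortComplex.mk jN q hwjN).Exact := by
    rw [ShortComplex.exact_iff_exact_up_to_refinements]
    intro X₀ x₂ hx₂
    obtain ⟨X', p, hp, t', hfac⟩ :=
      surjective_up_to_refinements_of_epi (cokernel.π δ) x₂
    have ht'0 : (t' ≫ biprod.fst) ≫ g = 0 := by
      have h1 : t' ≫ cokernel.π δ ≫ q = p ≫ x₂ ≫ q := by
        rw [← Category.assoc, ← hfac, Category.assoc]
      rw [hx₂, Limits.comp_zero, hπq] at h1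
      rw [biprod.desc_eq] at h1
      simp only [Limits.comp_zero, add_zero, Preadditive.comp_add] at h1
      rw [Category.assoc]
      simpa using h1
    set s₀ := hS.exact.lift (t' ≫ biprod.fst) ht'0 with hs₀
    have hs₀f : s₀ ≫ f = t' ≫ biprod.fst := hS.exact.lift_f _ _
    refine ⟨X', p, hp, s₀ ≫ u + t' ≫ biprod.snd, ?_⟩
    show p ≫ x₂ = _ ≫ jN
    rw [hfac]
    calc t' ≫ cokernel.π δ
        = t' ≫ (biprod.fst ≫ biprod.inl + biprod.snd ≫ biprod.inr) ≫ cokernel.π δ := by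
          rw [biprod.total, Category.id_comp]
      _ = (t' ≫ biprod.fst) ≫ jE + (t' ≫ biprod.snd) ≫ jN := by
          rw [Preadditive.add_comp, Preadditive.comp_add, hjE, hjN]
          simp only [Category.assoc]
      _ = (s₀ ≫ u + t' ≫ biprod.snd) ≫ jN := by
          rw [← hs₀f, Category.assoc, hcomm, Preadditive.add_comp]
          simp only [Category.assoc]
  have hSjN : (ShortComplex.mk jN q hwjN).ShortExact :=
    { exact := hexactjN, mono_f := hmonojN, epi_g := hepiq }
  obtain ⟨r, hr⟩ := retraction_of_extVanishes k hwjN hSjN hext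
  refine ⟨jE ≫ r, ?_⟩
  rw [← Category.assoc, hcomm, Category.assoc, hr, Category.comp_id]

/-- cokernel of `biprod.map a b` is `cokernel a ⊞ cokernel b`. -/
def isColimitCokernelBiprodMap {A B NA NB : C} (a : A ⟶ NA) (b : B ⟶ NB) :
    IsColimit (CokernelCofork.ofπ (biprod.map (cokernel.π a) (cokernel.π b))
      (show biprod.map a b ≫ _ = 0 by
        apply biprod.hom_ext <;> simp)) := by
  refine CokernelCofork.IsColimit.ofπ _ _
    (fun {Q₀} q hq => biprod.desc
      (cokernel.desc a (biprod.inl ≫ q) (by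
        rw [← Category.assoc, ← biprod.inl_map a b, Category.assoc, hq, Limits.comp_zero]))
      (cokernel.desc b (biprod.inr ≫ q) (by
        rw [← Category.assoc, ← biprod.inr_map a b, Category.assoc, hq, Limits.comp_zero])))
    ?_ ?_
  · intro Q₀ q hq
    apply biprod.hom_ext'
    · rw [biprod.inl_map_assoc, biprod.inl_desc, cokernel.π_desc]
    · rw [biprod.inr_map_assoc, biprod.inr_desc, cokernel.π_desc]
  · intro Q₀ q hq m hm
    apply biprod.hom_ext'
    · rw [biprod.inl_desc, ← cancel_epi (cokernel.π a), cokernel.π_desc, ← hm,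
        biprod.inl_map_assoc]
    · rw [biprod.inr_desc, ← cancel_epi (cokernel.π b), cokernel.π_desc, ← hm,
        biprod.inr_map_assoc]

/-- if `p` is a cokernel of `c`, then `biprod.map p (𝟙 K)` is a cokernel of `c ≫ inl`. -/
def isColimitCokernelCompInl {W Z Z' K : C} (c : W ⟶ Z) (p : Z ⟶ Z') (wp : c ≫ p = 0)
    (hp : IsColimit (CokernelCofork.ofπ p wp)) :
    IsColimit (CokernelCofork.ofπ (biprod.map p (𝟙 K))
      (show (c ≫ biprod.inl) ≫ _ = 0 by
        rw [Category.assoc, biprod.inl_map, ← Category.assoc, wp, zero_comp])) := by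
  have hepi : Epi p := epi_of_isColimit_cofork hp
  refine CokernelCofork.IsColimit.ofπ _ _
    (fun {Q₀} q hq => biprod.desc
      (hp.desc (CokernelCofork.ofπ (biprod.inl ≫ q) (by
        rw [← Category.assoc]; exact hq)))
      (biprod.inr ≫ q))
    ?_ ?_
  · intro Q₀ q hq
    apply biprod.hom_ext'
    · rw [biprod.inl_map_assoc, biprod.inl_desc]
      exact hp.fac _ WalkingParallelPair.one
    · rw [biprod.inr_map_assoc, biprod.inr_desc, Category.id_comp]
  · intro Q₀ q hq m hm
    apply biprod.hom_ext'
    · rw [biprod.inl_desc, ← cancel_epi p]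
      have h1 := hp.fac (CokernelCofork.ofπ (biprod.inl ≫ q) (by
        rw [← Category.assoc]; exact hq)) WalkingParallelPair.one
      dsimp at h1
      rw [h1, ← hm, biprod.inl_map_assoc]
    · rw [biprod.inr_desc, ← hm, biprod.inr_map_assoc, Category.id_comp]

/-- transport a cokernel colimit along an isomorphism precomposition. -/
def isColimitCokernelOfIsoComp {X Y Y' P : C} (f : X ⟶ Y) (ψ : Y ≅ Y') (c' : X ⟶ Y')
    (hc' : f ≫ ψ.hom = c') (p' : Y' ⟶ P) (wp' : c' ≫ p' = 0)
    (hp' : IsColimit (CokernelCofork.ofπ p' wp')) :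
    IsColimit (CokernelCofork.ofπ (ψ.hom ≫ p')
      (show f ≫ ψ.hom ≫ p' = 0 by rw [← Category.assoc, hc', wp'])) := by
  refine CokernelCofork.IsColimit.ofπ _ _
    (fun {Q₀} q hq => hp'.desc (CokernelCofork.ofπ (ψ.inv ≫ q) (by
      rw [← hc']
      rw [Category.assoc, Iso.hom_inv_id_assoc, hq])))
    ?_ ?_
  · intro Q₀ q hq
    have h1 := hp'.fac (CokernelCofork.ofπ (ψ.inv ≫ q) (by
      rw [← hc', Category.assoc, Iso.hom_inv_id_assoc, hq])) WalkingParallelPair.one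
    dsimp at h1
    rw [Category.assoc, h1, Iso.hom_inv_id_assoc]
  · intro Q₀ q hq m hm
    refine Cofork.IsColimit.hom_ext hp' ?_
    have h1 := hp'.fac (CokernelCofork.ofπ (ψ.inv ≫ q) (by
      rw [← hc', Category.assoc, Iso.hom_inv_id_assoc, hq])) WalkingParallelPair.one
    dsimp at h1
    show p' ≫ m = p' ≫ _
    rw [h1, ← hm]
    rw [← Category.assoc, ← Category.assoc, Iso.inv_hom_id, Category.id_comp]

end Helpers

theorem stmt2 (k : Type*) [Field k] [Linear k C]
    [EnoughProjectives C] [EnoughInjectives C]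
    (hKS : IsKrullSchmidt C) (hfin : ∀ X Y : C, Module.Finite k (X ⟶ Y))
    (M Y : C → Prop) (hpair : IsRigidCotorsionPair k M Y)
    (A B : C) (hAB : MemCoCone M M (A ⊞ B)) :
    MemCoCone M M A := by
  obtain ⟨M₀, M₁, ι, π, hM₀, hM₁, wι, hS⟩ := hAB
  have hmonoι : Mono ι := hS.mono_f
  have hsub := hpair.1.subcatM
  -- minimal versions of the two component maps
  obtain ⟨NA, PA, φA, a, ha, haMin⟩ := exists_left_minimal_version k hfin M₀ (biprod.inl ≫ ι)
  obtain ⟨NB, PB, φB, b, hb, hbMin⟩ := exists_left_minimal_version k hfin M₀ (biprod.inr ≫ ι)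
  have hMNA : M NA := (hsub.summands_mem (hsub.of_iso φA hM₀)).1
  have hMNB : M NB := (hsub.summands_mem (hsub.of_iso φB hM₀)).1
  have hMNN : M (NA ⊞ NB) := hsub.sum_mem hMNA hMNB
  -- the map u : NA ⊞ NB ⟶ M₀
  set u : NA ⊞ NB ⟶ M₀ := biprod.desc (biprod.inl ≫ φA.inv) (biprod.inl ≫ φB.inv) with hu
  have hliftA : biprod.lift a (0 : A ⟶ PA) = a ≫ biprod.inl := by
    apply biprod.hom_ext <;> simp
  have hliftB : biprod.lift b (0 : B ⟶ PB) = b ≫ biprod.inl := by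
    apply biprod.hom_ext <;> simp
  have hcu : biprod.map a b ≫ u = ι := by
    apply biprod.hom_ext'
    · rw [biprod.inl_map_assoc, hu, biprod.inl_desc]
      have h2 : (biprod.inl ≫ ι) ≫ φA.hom ≫ φA.inv = biprod.inl ≫ ι := by simp
      rw [← h2, ← Category.assoc (biprod.inl ≫ ι) φA.hom, ha, hliftA]
      simp only [Category.assoc]
    · rw [biprod.inr_map_assoc, hu, biprod.inr_desc]
      have h2 : (biprod.inr ≫ ι) ≫ φB.hom ≫ φB.inv = biprod.inr ≫ ι := by simp
      rw [← h2, ← Category.assoc (biprod.inr ≫ ι) φB.hom, hb, hliftB]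
      simp only [Category.assoc]
  -- lift `biprod.map a b` along ι using Ext vanishing
  have hext : extVanishes k 1 M₁ (NA ⊞ NB) := hpair.2 hM₁ hMNN
  obtain ⟨v, hv⟩ := lift_of_extVanishes k wι hS hext (biprod.map a b)
  have h1 : biprod.map a b ≫ (u ≫ v) = biprod.map a b := by
    rw [← Category.assoc, hcu, hv]
  have hisouv : IsIso (u ≫ v) := leftMinimal_biprod_map haMin hbMin _ h1
  set ρ : M₀ ⟶ NA ⊞ NB := v ≫ inv (u ≫ v) with hρ
  have huρ : u ≫ ρ = 𝟙 (NA ⊞ NB) := by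
    rw [hρ, ← Category.assoc, IsIso.hom_inv_id]
  -- the complement : cokernel u
  have huσ0 : u ≫ (𝟙 M₀ - ρ ≫ u) = 0 := by
    rw [Preadditive.comp_sub, Category.comp_id, ← Category.assoc, huρ, Category.id_comp,
      sub_self]
  set σ : cokernel u ⟶ M₀ := cokernel.desc u (𝟙 M₀ - ρ ≫ u) huσ0 with hσ
  have hπσ : cokernel.π u ≫ σ = 𝟙 M₀ - ρ ≫ u := cokernel.π_desc _ _ _
  have hσρ : σ ≫ ρ = 0 := by
    rw [← cancel_epi (cokernel.π u), ← Category.assoc, hπσ, Preadditive.sub_comp,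
      Category.id_comp, Category.assoc, huρ, Category.comp_id, sub_self, Limits.comp_zero]
  have hσπ : σ ≫ cokernel.π u = 𝟙 (cokernel u) := by
    rw [← cancel_epi (cokernel.π u), ← Category.assoc, hπσ, Preadditive.sub_comp,
      Category.id_comp, Category.assoc, cokernel.condition, Limits.comp_zero, sub_zero,
      Category.comp_id]
  set ψ : M₀ ≅ (NA ⊞ NB) ⊞ cokernel u :=
    { hom := biprod.lift ρ (cokernel.π u)
      inv := biprod.desc u σ
      hom_inv_id := by
        rw [biprod.lift_desc, hπσ]
        abel
      inv_hom_id := by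
        apply biprod.hom_ext'
        · rw [biprod.inl_desc_assoc, Category.comp_id]
          apply biprod.hom_ext
          · rw [Category.assoc, biprod.lift_fst, biprod.inl_fst, huρ]
          · rw [Category.assoc, biprod.lift_snd, biprod.inl_snd, cokernel.condition]
        · rw [biprod.inr_desc_assoc, Category.comp_id]
          apply biprod.hom_ext
          · rw [Category.assoc, biprod.lift_fst, biprod.inr_fst, hσρ]
          · rw [Category.assoc, biprod.lift_snd, biprod.inr_snd, hσπ] } with hψ
  have hψι : ι ≫ ψ.hom = biprod.map a b ≫ biprod.inl := by
    have hψhom : ψ.hom = biprod.lift ρ (cokernel.π u) := rfl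
    have hmapinv : biprod.map a b ≫ inv (u ≫ v) = biprod.map a b := by
      rw [IsIso.comp_inv_eq]
      exact h1.symm
    rw [hψhom]
    apply biprod.hom_ext
    · simp only [Category.assoc, biprod.lift_fst, biprod.inl_fst, Category.comp_id]
      rw [hρ, ← Category.assoc, hv, hmapinv]
    · simp only [Category.assoc, biprod.lift_snd, biprod.inl_snd, Limits.comp_zero]
      rw [← hcu, Category.assoc, cokernel.condition, Limits.comp_zero]
  -- identify M₁ with (cokernel a ⊞ cokernel b) ⊞ cokernel u
  have hcok2 := isColimitCokernelCompInl (K := cokernel u) (biprod.map a b)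
    (biprod.map (cokernel.π a) (cokernel.π b)) _ (isColimitCokernelBiprodMap a b)
  have hcok3 := isColimitCokernelOfIsoComp ι ψ (biprod.map a b ≫ biprod.inl) hψι
    (biprod.map (biprod.map (cokernel.π a) (cokernel.π b)) (𝟙 (cokernel u))) _ hcok2
  have hcokι := hS.gIsCokernel
  have e : M₁ ≅ (cokernel a ⊞ cokernel b) ⊞ cokernel u :=
    IsColimit.coconePointUniqueUpToIso hcokι hcok3
  have hMcoka : M (cokernel a) :=
    (hsub.summands_mem (hsub.summands_mem (hsub.of_iso e hM₁)).1).1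
  -- a is a monomorphism
  have hmonoliftA : Mono (biprod.lift a (0 : A ⟶ PA)) := by
    have h3 : biprod.lift a (0 : A ⟶ PA) = (biprod.inl ≫ ι) ≫ φA.hom := ha.symm
    rw [h3]
    have : Mono (biprod.inl ≫ ι) := mono_comp _ _
    exact mono_comp _ _
  have hmonoa : Mono a := by
    constructor
    intro Z x y hxy
    have h4 : x ≫ biprod.lift a (0 : A ⟶ PA) = y ≫ biprod.lift a (0 : A ⟶ PA) := by
      apply biprod.hom_ext <;> simp [hxy]
    exact (cancel_mono (biprod.lift a (0 : A ⟶ PA))).1 h4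
  -- conclude
  refine ⟨NA, cokernel a, a, cokernel.π a, hMNA, hMcoka, cokernel.condition a, ?_⟩
  exact
    { exact := ShortComplex.exact_of_g_is_cokernel _ (cokernelIsCokernel a)
      mono_f := hmonoa
      epi_g := inferInstance }
end
end

section
/- Let (M, Y) be a rigid cotorsion pair on C. Suppose given short exact sequences 0 → Y₁ → B →(m) A → 0, 0 → Y₁ → M₁ →(n) Y → 0, 0 → B →(h) M₁ →(i) M → 0 and 0 → A →(f) Y →(g) M → 0 with Y₁, Y ∈ Y and M₁, M ∈ M, such that f ∘ m = n ∘ h, g ∘ n = i, and the two sequences with kernel Y₁ are compatible (the square with vertical maps h and f commutes over the identity of Y₁). Then for every object X and every morphism α : X → B such that m ∘ α factors through an object of Y, the morphism α itself factors through an object of Y. (That is, the image of m in the quotient C/Y is a monomorphism.) -/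
open CategoryTheory CategoryTheory.Limits Opposite

attribute [local instance] CategoryTheory.Limits.HasFiniteBiproducts.of_hasFiniteProducts

noncomputable section

universe v u

variable {C : Type u} [Category.{v} C] [Abelian C]

lemma IsSES.zero {X Y Z : C} {f : X ⟶ Y} {g : Y ⟶ Z} (h : IsSES f g) : f ≫ g = 0 := h.choose

lemma IsSES.mono {X Y Z : C} {f : X ⟶ Y} {g : Y ⟶ Z} (h : IsSES f g) : Mono f :=
  h.choose_spec.mono_f

lemma IsSES.epi {X Y Z : C} {f : X ⟶ Y} {g : Y ⟶ Z} (h : IsSES f g) : Epi g :=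
  h.choose_spec.epi_g

/-- lift through the kernel -/
lemma IsSES.lift' {X Y Z T : C} {f : X ⟶ Y} {g : Y ⟶ Z} (h : IsSES f g)
    (t : T ⟶ Y) (ht : t ≫ g = 0) : ∃ z : T ⟶ X, z ≫ f = t := by
  haveI := h.mono
  exact h.choose_spec.exact.lift' t ht

lemma IsSES.desc' {X Y Z T : C} {f : X ⟶ Y} {g : Y ⟶ Z} (h : IsSES f g)
    (t : Y ⟶ T) (ht : f ≫ t = 0) : ∃ z : Z ⟶ T, g ≫ z = t := by
  haveI := h.epi
  exact h.choose_spec.exact.desc' t ht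

lemma isSES_of_kernel {X Y Z : C} {f : X ⟶ Y} {g : Y ⟶ Z} (w : f ≫ g = 0)
    (hm : Mono f) (he : Epi g)
    (hk : ∀ (T : C) (t : T ⟶ Y), t ≫ g = 0 → ∃ z : T ⟶ X, z ≫ f = t) : IsSES f g := by
  refine ⟨w, ShortComplex.ShortExact.mk' ?_ hm he⟩
  apply ShortComplex.exact_of_f_is_kernel
  exact KernelFork.IsLimit.ofι f w
    (fun {T} t ht => (hk T t ht).choose)
    (fun {T} t ht => (hk T t ht).choose_spec)
    (fun {T} t ht m hm' => by
      rw [← cancel_mono f, hm', (hk T t ht).choose_spec])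

/-- Pullback of a SES along a morphism. -/
lemma isSES_pullback {Y₁ B A Y' : C} {i₁ : Y₁ ⟶ B} {m : B ⟶ A} (hs : IsSES i₁ m)
    (v : Y' ⟶ A) :
    IsSES (pullback.lift i₁ 0 (by rw [hs.zero, zero_comp]) : Y₁ ⟶ pullback m v)
      (pullback.snd m v) := by
  haveI := hs.mono
  haveI := hs.epi
  set κ : Y₁ ⟶ pullback m v := pullback.lift i₁ 0 (by rw [hs.zero, zero_comp])
  have hκf : κ ≫ pullback.fst m v = i₁ := pullback.lift_fst _ _ _
  have hκs : κ ≫ pullback.snd m v = 0 := pullback.lift_snd _ _ _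
  have hmono : Mono κ := by
    have : Mono (κ ≫ pullback.fst m v) := by rw [hκf]; infer_instance
    exact mono_of_mono κ (pullback.fst m v)
  have hepi : Epi (pullback.snd m v) := inferInstance
  refine isSES_of_kernel hκs hmono hepi ?_
  intro T t ht
  have h1 : (t ≫ pullback.fst m v) ≫ m = 0 := by
    rw [Category.assoc, pullback.condition, ← Category.assoc, ht, zero_comp]
  obtain ⟨z, hz⟩ := hs.lift' _ h1
  refine ⟨z, ?_⟩
  apply pullback.hom_ext
  · rw [Category.assoc, hκf, hz]
  · rw [Category.assoc, hκs, comp_zero, ht]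

/-- dual helper -/
lemma isSES_of_cokernel {X Y Z : C} {f : X ⟶ Y} {g : Y ⟶ Z} (w : f ≫ g = 0)
    (hm : Mono f) (he : Epi g)
    (hk : ∀ (T : C) (t : Y ⟶ T), f ≫ t = 0 → ∃ z : Z ⟶ T, g ≫ z = t) : IsSES f g := by
  refine ⟨w, ShortComplex.ShortExact.mk' ?_ hm he⟩
  apply ShortComplex.exact_of_g_is_cokernel
  exact CokernelCofork.IsColimit.ofπ g w
    (fun {T} t ht => (hk T t ht).choose)
    (fun {T} t ht => (hk T t ht).choose_spec)
    (fun {T} t ht m' hm' => by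
      rw [← cancel_epi g, hm', (hk T t ht).choose_spec])

/-- Pushout of a SES along a morphism: the "parallel" SES. -/
lemma isSES_pushout {Q E M' Y' : C} {u : Q ⟶ E} {vv : E ⟶ M'} (hs : IsSES u vv)
    (p : Q ⟶ Y') :
    IsSES (pushout.inr u p : Y' ⟶ pushout u p)
      (pushout.desc vv 0 (by rw [hs.zero, comp_zero])) := by
  haveI := hs.mono
  haveI := hs.epi
  set v' : pushout u p ⟶ M' := pushout.desc vv 0 (by rw [hs.zero, comp_zero])
  have hinl : pushout.inl u p ≫ v' = vv := pushout.inl_desc _ _ _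
  have hinr : pushout.inr u p ≫ v' = 0 := pushout.inr_desc _ _ _
  have hmono : Mono (pushout.inr u p) := inferInstance
  have hepi : Epi v' := by
    have : Epi (pushout.inl u p ≫ v') := by rw [hinl]; infer_instance
    exact epi_of_epi (pushout.inl u p) v'
  refine isSES_of_cokernel hinr hmono hepi ?_
  intro T t ht
  have h1 : u ≫ pushout.inl u p ≫ t = 0 := by
    rw [← Category.assoc, pushout.condition, Category.assoc, ht, comp_zero]
  obtain ⟨z, hz⟩ := hs.desc' (pushout.inl u p ≫ t) h1
  refine ⟨z, ?_⟩
  apply pushout.hom_ext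
  · rw [← Category.assoc, hinl, hz]
  · rw [← Category.assoc, hinr, zero_comp, ht]

/-- Pushout of SES along p with kernel data: inl has kernel Y₁. -/
lemma isSES_pushout_inl {Y₁ Q Y' E M' : C} {j : Y₁ ⟶ Q} {p : Q ⟶ Y'}
    {u : Q ⟶ E} {vv : E ⟶ M'} (hj : IsSES j p) (hs : IsSES u vv) :
    IsSES (j ≫ u) (pushout.inl u p) := by
  haveI := hs.mono
  haveI := hs.epi
  haveI := hj.mono
  haveI := hj.epi
  have hzero : (j ≫ u) ≫ pushout.inl u p = 0 := by
    rw [Category.assoc, pushout.condition, ← Category.assoc, hj.zero, zero_comp]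
  have hmono : Mono (j ≫ u) := mono_comp _ _
  have hepi : Epi (pushout.inl u p) := inferInstance
  refine isSES_of_kernel hzero hmono hepi ?_
  intro T t ht
  have h1 : t ≫ vv = 0 := by
    have : vv = pushout.inl u p ≫ pushout.desc vv 0 (by rw [hs.zero, comp_zero]) :=
      (pushout.inl_desc _ _ _).symm
    rw [this, ← Category.assoc, ht, zero_comp]
  obtain ⟨z, hz⟩ := hs.lift' t h1
  have h2 : z ≫ p = 0 := by
    rw [← cancel_mono (pushout.inr u p), Category.assoc, ← pushout.condition, zero_comp,
      ← Category.assoc, hz, ht]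
  obtain ⟨y, hy⟩ := hj.lift' z h2
  exact ⟨y, by rw [← Category.assoc, hy, hz]⟩

lemma ext1Vanishes_of_extVanishes (k : Type*) [Field k] [Linear k C] [EnoughProjectives C]
    {X Z : C} (hvan : extVanishes k 1 X Z) : Ext1Vanishes X Z := by
  intro E f g hses
  obtain ⟨w, hE⟩ := hses
  haveI := hE.mono_f
  haveI := hE.epi_g
  let P : ProjectiveResolution X := ProjectiveResolution.of X
  let Pc := P.complex
  let K := Pc.linearYonedaObj k Z
  have hK : IsZero (K.homology 1) := hvan.of_iso (P.isoExt 1 Z).symm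
  have hex : K.ExactAt 1 := (HomologicalComplex.exactAt_iff_isZero_homology _ _).2 hK
  have hex' : (ShortComplex.mk (K.d 0 1) (K.d 1 2) (K.d_comp_d 0 1 2)).Exact :=
    (K.exactAt_iff' 0 1 2 (by simp) (by simp)).1 hex
  rw [ShortComplex.moduleCat_exact_iff] at hex'
  let e : ((ChainComplex.single₀ C).obj X).X 0 ≅ X :=
    HomologicalComplex.singleObjXSelf (ComplexShape.down ℕ) 0 X
  let π0 : Pc.X 0 ⟶ X := P.π.f 0 ≫ e.hom
  have hπ0 : Epi π0 := epi_comp _ _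
  let lam : Pc.X 0 ⟶ E := Projective.factorThru π0 g
  have hlam : lam ≫ g = π0 := Projective.factorThru_comp _ _
  have hdl : (Pc.d 1 0 ≫ lam) ≫ g = 0 := by
    rw [Category.assoc, hlam]
    simp [π0, e, Pc, ProjectiveResolution.complex_d_comp_π_f_zero]
    exact (Category.assoc _ _ _).symm.trans
      ((congrArg (fun t => t ≫ 𝟙 X) P.complex_d_comp_π_f_zero).trans zero_comp)
  let φ : Pc.X 1 ⟶ Z := hE.exact.lift (Pc.d 1 0 ≫ lam) (by simpa using hdl)
  have hφ : φ ≫ f = Pc.d 1 0 ≫ lam := hE.exact.lift_f _ _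
  have hcocycle : (K.d 1 2) φ = 0 := by
    have : Pc.d 2 1 ≫ φ = 0 := by
      rw [← cancel_mono f, Category.assoc, hφ, zero_comp, ← Category.assoc]
      simp [Pc]
    show Pc.d 2 1 ≫ φ = 0
    exact this
  obtain ⟨ψ, hψ⟩ := hex' φ hcocycle
  have hψ' : Pc.d 1 0 ≫ ψ = φ := hψ
  let lam' : Pc.X 0 ⟶ E := lam - ψ ≫ f
  have hd10 : Pc.d 1 0 ≫ lam' = 0 := by
    simp only [lam', Preadditive.comp_sub]
    rw [sub_eq_zero, ← hφ, ← hψ']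
    exact Category.assoc _ _ _
  have hlam' : lam' ≫ g = π0 := by
    simp only [lam', Preadditive.sub_comp, Category.assoc, w, comp_zero, sub_zero, hlam]
    exact sub_eq_self.2 ((Category.assoc _ _ _).trans (by rw [w]; exact comp_zero))
  have hexact0 := P.exact₀
  have hepi : Epi (P.π.f 0) := inferInstance
  let des : ((ChainComplex.single₀ C).obj X).X 0 ⟶ E := hexact0.desc lam' hd10
  have hdes : P.π.f 0 ≫ des = lam' := hexact0.g_desc _ _
  refine ⟨e.inv ≫ des, ?_⟩
  have : des ≫ g = e.hom := by
    rw [← cancel_epi (P.π.f 0), ← Category.assoc, hdes, hlam']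
  rw [Category.assoc, this, e.inv_hom_id]


lemma split_of_ext1 {Y₁ Q Y' E M' : C} {j : Y₁ ⟶ Q} {p : Q ⟶ Y'} {u : Q ⟶ E} {vv : E ⟶ M'}
    (h1 : IsSES j p) (h2 : IsSES u vv)
    (e1 : Ext1Vanishes M' Y') (e2 : Ext1Vanishes M' Y₁) :
    ∃ s : M' ⟶ E, s ≫ vv = 𝟙 M' := by
  obtain ⟨s', hs'⟩ := e1 _ _ _ (isSES_pushout h2 p)
  obtain ⟨t, ht⟩ := e2 _ _ _ (isSES_pullback (isSES_pushout_inl h1 h2) s')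
  refine ⟨t ≫ pullback.fst (pushout.inl u p) s', ?_⟩
  have hvv : pushout.inl u p ≫ pushout.desc vv 0 (by rw [h2.zero, comp_zero]) = vv :=
    pushout.inl_desc _ _ _
  have key : pullback.fst (pushout.inl u p) s' ≫ pushout.inl u p ≫
      pushout.desc vv 0 (by rw [h2.zero, comp_zero]) =
      pullback.snd (pushout.inl u p) s' ≫ 𝟙 M' := by
    rw [← Category.assoc, pullback.condition, Category.assoc, hs']
  rw [← hvv, Category.assoc, key, Category.comp_id, ht]

lemma mem_Y_of_extension (k : Type*) [Field k] [Linear k C] [EnoughProjectives C]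
    {M Y : C → Prop} (hp : IsCotorsionPair k M Y)
    {Y₁ Q Y' : C} (hY₁ : Y Y₁) (hY' : Y Y') {j : Y₁ ⟶ Q} {p : Q ⟶ Y'}
    (hs : IsSES j p) : Y Q := by
  obtain ⟨YQ, MQ, q, r, hYQ, hMQ, hq⟩ := hp.exists_cores Q
  have e1 : Ext1Vanishes MQ Y' := ext1Vanishes_of_extVanishes k (hp.ext_vanishes hMQ hY')
  have e2 : Ext1Vanishes MQ Y₁ := ext1Vanishes_of_extVanishes k (hp.ext_vanishes hMQ hY₁)
  obtain ⟨sec, hsec⟩ := split_of_ext1 hs hq e1 e2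
  obtain ⟨w, hE⟩ := hq
  have spl := ShortComplex.Splitting.ofExactOfSection _ hE.exact sec hsec hE.mono_f
  exact (hp.subcatY.summands_mem (hp.subcatY.of_iso spl.isoBinaryBiproduct hYQ)).1


theorem stmt4 (k : Type*) [Field k] [Linear k C]
    [EnoughProjectives C] [EnoughInjectives C]
    (hKS : IsKrullSchmidt C) (hfin : ∀ X Y : C, Module.Finite k (X ⟶ Y))
    (M Y : C → Prop) (hpair : IsRigidCotorsionPair k M Y)
    {Y₁ B A M₁ Y₀ M₀ : C}
    (i₁ : Y₁ ⟶ B) (m : B ⟶ A) (i₂ : Y₁ ⟶ M₁) (n : M₁ ⟶ Y₀)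
    (h : B ⟶ M₁) (i : M₁ ⟶ M₀) (f : A ⟶ Y₀) (g : Y₀ ⟶ M₀)
    (hY₁ : Y Y₁) (hY₀ : Y Y₀) (hM₁ : M M₁) (hM₀ : M M₀)
    (s₁ : IsSES i₁ m) (s₂ : IsSES i₂ n) (s₃ : IsSES h i) (s₄ : IsSES f g)
    (c₁ : m ≫ f = h ≫ n) (c₂ : n ≫ g = i) (c₃ : i₁ ≫ h = i₂)
    (X : C) (α : X ⟶ B) (hα : FactorsThruSubcat Y (α ≫ m)) :
    FactorsThruSubcat Y α := by
  obtain ⟨Y', w, v, hY', hw⟩ := hα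
  have hQ := isSES_pullback s₁ v
  have hYQ : Y (pullback m v) := mem_Y_of_extension k hpair.1 hY₁ hY' hQ
  exact ⟨pullback m v, pullback.lift α w hw.symm, pullback.fst m v, hYQ,
    pullback.lift_fst _ _ _⟩
end
end

section
/- Let (M, Y) be a rigid cotorsion pair on C. Suppose given short exact sequences 0 → Y₁ → B →(m) A → 0, 0 → Y₁ → M₁ →(n) Y → 0, 0 → B →(h) M₁ →(i) M → 0 and 0 → A →(f) Y →(g) M → 0 with Y₁, Y ∈ Y and M₁, M ∈ M, such that f ∘ m = n ∘ h, g ∘ n = i, and the two sequences with kernel Y₁ are compatible (the square with vertical maps h and f commutes over the identity of Y₁). Then for every object Z and every morphism β : A → Z such that β ∘ m factors through an object of Y, the morphism β itself factors through an object of Y (indeed β factors through f : A → Y). (That is, the image of m in the quotient C/Y is an epimorphism.) -/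
open CategoryTheory CategoryTheory.Limits Opposite

attribute [local instance] CategoryTheory.Limits.HasFiniteBiproducts.of_hasFiniteProducts

noncomputable section

universe v u

variable {C : Type u} [Category.{v} C] [Abelian C]

section AuxLemmas

variable (k : Type*) [Field k] [Linear k C] [EnoughProjectives C]

/-- If `Ext¹(X, Z) = 0` then every short exact sequence `0 ⟶ Z ⟶ E ⟶ X ⟶ 0` splits. -/
lemma aux_split {X Z : C} (hv : extVanishes k 1 X Z) : Ext1Vanishes X Z := by
  rintro E f g ⟨w0, hS⟩
  haveI := hS.epi_g
  haveI := hS.mono_f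
  let P : CategoryTheory.ProjectiveResolution X := CategoryTheory.ProjectiveResolution.of X
  set K := P.complex.linearYonedaObj k Z with hK
  have hz : IsZero (K.homology 1) := IsZero.of_iso hv (P.isoExt 1 Z).symm
  have hex : (K.sc' 0 1 2).Exact := by
    rw [← HomologicalComplex.exactAt_iff' K 0 1 2 (by simp) (by simp)]
    rw [HomologicalComplex.exactAt_iff_isZero_homology]
    exact hz
  set π : P.complex.X 0 ⟶ X := P.π.f 0 with hπ
  have hπepi : Epi π := by exact (inferInstance : Epi (P.π.f 0))
  set p : P.complex.X 0 ⟶ E := Projective.factorThru π g with hp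
  have hpg : p ≫ g = π := Projective.factorThru_comp _ _
  have hdp : (P.complex.d 1 0 ≫ p) ≫ g = 0 := by
    rw [Category.assoc, hpg]; simp [hπ]; exact P.complex_d_comp_π_f_zero
  obtain ⟨q₁, hq₁⟩ := KernelFork.IsLimit.lift' hS.fIsKernel (P.complex.d 1 0 ≫ p) hdp
  have hq₁' : q₁ ≫ f = P.complex.d 1 0 ≫ p := hq₁
  have hcocyc : (K.d 1 2) q₁ = 0 := by
    have h2 : P.complex.d 2 1 ≫ q₁ = 0 := by
      rw [← cancel_mono f]
      simp only [Category.assoc]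
      rw [hq₁']
      simp
    exact h2
  obtain ⟨t, ht⟩ := (ShortComplex.moduleCat_exact_iff _).mp hex q₁ hcocyc
  change P.complex.X 0 ⟶ Z at t
  have ht' : P.complex.d 1 0 ≫ t = q₁ := by
    exact ht
  set s' : P.complex.X 0 ⟶ E := p - t ≫ f with hs'
  have hds' : P.complex.d 1 0 ≫ s' = 0 := by
    simp only [hs', Preadditive.comp_sub, ← Category.assoc, ht', hq₁']
    simp
  obtain ⟨s, hs⟩ := Cofork.IsColimit.desc' P.isColimitCokernelCofork s'
    (by rw [zero_comp]; exact hds')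
  change X ⟶ E at s
  have hs2 : π ≫ s = s' := hs
  refine ⟨s, ?_⟩
  rw [← cancel_epi π, ← Category.assoc, hs2]
  simp [hs', hpg, Preadditive.sub_comp, w0]

/-- If `Ext¹(X₃, Z) = 0` and `0 ⟶ X₁ ⟶ X₂ ⟶ X₃ ⟶ 0` is exact, then every morphism
`X₁ ⟶ Z` extends to `X₂`. -/
lemma aux_lift {X₁ X₂ X₃ Z : C} (hv : extVanishes k 1 X₃ Z)
    {f : X₁ ⟶ X₂} {g : X₂ ⟶ X₃} (hs : IsSES f g) (w : X₁ ⟶ Z) :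
    ∃ w' : X₂ ⟶ Z, f ≫ w' = w := by
  obtain ⟨w0, hS⟩ := hs
  have hmf : Mono f := hS.mono_f
  have heg : Epi g := hS.epi_g
  set E := pushout w f with hE
  set a : Z ⟶ E := pushout.inl w f with ha
  set b : X₂ ⟶ E := pushout.inr w f with hb
  have hcond : w ≫ a = f ≫ b := pushout.condition
  set e : E ⟶ X₃ := pushout.desc 0 g (by rw [comp_zero, w0]) with he
  have hae : a ≫ e = 0 := pushout.inl_desc _ _ _
  have hbe : b ≫ e = g := pushout.inr_desc _ _ _
  have hma : Mono a := by infer_instance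
  have hee : Epi e := by
    have : Epi (b ≫ e) := by rw [hbe]; infer_instance
    exact epi_of_epi b e
  have hcoker : IsColimit (CokernelCofork.ofπ e hae) := by
    refine CokernelCofork.IsColimit.ofπ e hae (fun {Q} c hc => ?_) ?_ ?_
    · exact (Cofork.IsColimit.desc' hS.gIsCokernel (b ≫ c)
        (by show f ≫ b ≫ c = 0 ≫ b ≫ c
            rw [zero_comp, ← Category.assoc, ← hcond, Category.assoc, hc, comp_zero])).1
    · intro Q c hc
      apply pushout.hom_ext
      · show a ≫ e ≫ _ = a ≫ c
        rw [← Category.assoc, hae, zero_comp, hc]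
      · show b ≫ e ≫ _ = b ≫ c
        rw [← Category.assoc, hbe]
        exact (Cofork.IsColimit.desc' hS.gIsCokernel (b ≫ c) _).2
    · intro Q c hc m hm
      rw [← cancel_epi e, hm, eq_comm]
      apply pushout.hom_ext
      · show a ≫ e ≫ _ = a ≫ c
        rw [← Category.assoc, hae, zero_comp, hc]
      · show b ≫ e ≫ _ = b ≫ c
        rw [← Category.assoc, hbe]
        exact (Cofork.IsColimit.desc' hS.gIsCokernel (b ≫ c) _).2
  have hexact : (ShortComplex.mk a e hae).Exact :=
    ShortComplex.exact_of_g_is_cokernel _ hcoker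
  have hSE : (ShortComplex.mk a e hae).ShortExact :=
    { exact := hexact, mono_f := hma, epi_g := hee }
  obtain ⟨s, hsplit'⟩ := aux_split k hv E a e ⟨hae, hSE⟩
  have hτ : (𝟙 E - e ≫ s) ≫ e = 0 := by
    rw [Preadditive.sub_comp, Category.id_comp, Category.assoc, hsplit', Category.comp_id,
      sub_self]
  obtain ⟨r, hr⟩ := KernelFork.IsLimit.lift' hSE.fIsKernel (𝟙 E - e ≫ s) hτ
  have hr' : r ≫ a = 𝟙 E - e ≫ s := hr
  have hra : a ≫ r ≫ a = a := by
    rw [hr', Preadditive.comp_sub, Category.comp_id, ← Category.assoc, hae, zero_comp, sub_zero]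
  have har : a ≫ r = 𝟙 Z := by
    rw [← cancel_mono a, Category.assoc, hra, Category.id_comp]
  refine ⟨b ≫ r, ?_⟩
  rw [← Category.assoc, ← hcond, Category.assoc, har, Category.comp_id]

end AuxLemmas

theorem stmt5 (k : Type*) [Field k] [Linear k C]
    [EnoughProjectives C] [EnoughInjectives C]
    (hKS : IsKrullSchmidt C) (hfin : ∀ X Y : C, Module.Finite k (X ⟶ Y))
    (M Y : C → Prop) (hpair : IsRigidCotorsionPair k M Y)
    {Y₁ B A M₁ Y₀ M₀ : C}
    (i₁ : Y₁ ⟶ B) (m : B ⟶ A) (i₂ : Y₁ ⟶ M₁) (n : M₁ ⟶ Y₀)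
    (h : B ⟶ M₁) (i : M₁ ⟶ M₀) (f : A ⟶ Y₀) (g : Y₀ ⟶ M₀)
    (hY₁ : Y Y₁) (hY₀ : Y Y₀) (hM₁ : M M₁) (hM₀ : M M₀)
    (s₁ : IsSES i₁ m) (s₂ : IsSES i₂ n) (s₃ : IsSES h i) (s₄ : IsSES f g)
    (c₁ : m ≫ f = h ≫ n) (c₂ : n ≫ g = i) (c₃ : i₁ ≫ h = i₂)
    (Z : C) (β : A ⟶ Z) (hβ : FactorsThruSubcat Y (m ≫ β)) :
    FactorsThruSubcat Y β ∧ ∃ u : Y₀ ⟶ Z, f ≫ u = β := by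
  obtain ⟨Y', w, v, hY', hwv⟩ := hβ
  obtain ⟨w', hw'⟩ := aux_lift k (hpair.1.ext_vanishes hM₀ hY') s₃ w
  obtain ⟨z₁, hs₁⟩ := s₁
  obtain ⟨z₂, hs₂⟩ := s₂
  have hi₂ : i₂ ≫ w' ≫ v = 0 := by
    rw [← c₃, Category.assoc, ← Category.assoc h, hw', hwv, ← Category.assoc, z₁, zero_comp]
  obtain ⟨u, hu⟩ := Cofork.IsColimit.desc' hs₂.gIsCokernel (w' ≫ v)
    (by rw [zero_comp]; exact hi₂)
  have hu2 : n ≫ u = w' ≫ v := hu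
  haveI : Epi m := hs₁.epi_g
  have hfu : f ≫ u = β := by
    rw [← cancel_epi m, ← Category.assoc, c₁, Category.assoc, hu2, ← Category.assoc, hw', hwv]
  exact ⟨⟨Y₀, f, u, hY₀, hfu⟩, u, hfu⟩
end
end

section
/- Let M be a fully rigid and 2-rigid subcategory of C, with associated rigid cotorsion pair (M, Y). Then Ω(H_Y) ⊆ Y: for every indecomposable object A ∈ H having no nonzero direct summand in Y, and every short exact sequence 0 → ΩA → P → A → 0 with P projective and P → A right minimal, the syzygy ΩA belongs to Y. -/
open CategoryTheory CategoryTheory.Limits Opposite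

attribute [local instance] CategoryTheory.Limits.HasFiniteBiproducts.of_hasFiniteProducts

noncomputable section

universe v u

variable {C : Type u} [Category.{v} C] [Abelian C]

/-! ### Auxiliary lemmas -/

section AuxSplit

variable {C : Type u} [Category.{v} C] [Abelian C]

open ZeroObject

/-- From a short exact sequence and a section of `g`, a splitting. -/
noncomputable def auxSplitting {X E Z : C} {f : X ⟶ E} {g : E ⟶ Z} (w : f ≫ g = 0)
    (hse : (ShortComplex.mk f g w).ShortExact) {s : Z ⟶ E} (hs : s ≫ g = 𝟙 Z) :
    (ShortComplex.mk f g w).Splitting :=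
  ShortComplex.Splitting.ofExactOfSection _ hse.exact s hs hse.mono_f

lemma aux_iso_of_section {X E Z : C} {f : X ⟶ E} {g : E ⟶ Z} (w : f ≫ g = 0)
    (hse : (ShortComplex.mk f g w).ShortExact) {s : Z ⟶ E} (hs : s ≫ g = 𝟙 Z) :
    Nonempty (E ≅ X ⊞ Z) :=
  ⟨(auxSplitting w hse hs).isoBinaryBiproduct⟩

lemma aux_iso_of_retraction {X E Z : C} {f : X ⟶ E} {g : E ⟶ Z} (w : f ≫ g = 0)
    (hse : (ShortComplex.mk f g w).ShortExact) {r : E ⟶ X} (hr : f ≫ r = 𝟙 X) :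
    Nonempty (E ≅ X ⊞ Z) := by
  have := hse.epi_g
  exact ⟨(ShortComplex.Splitting.ofExactOfRetraction _ hse.exact r hr this).isoBinaryBiproduct⟩

/-- A subcategory closed under summands containing any object contains all zero objects. -/
lemma aux_mem_of_isZero {S : C → Prop} (hS : IsAdditiveSubcat S) {W : C} (hW : S W)
    {Z : C} (hZ : IsZero Z) : S Z := by
  have e : W ≅ W ⊞ Z := by
    refine ⟨biprod.lift (𝟙 W) 0, biprod.fst, by simp, ?_⟩
    apply biprod.hom_ext
    · simp
    · exact hZ.eq_of_tgt _ _
  exact (hS.summands_mem (hS.of_iso e hW)).2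

noncomputable def aux_iso_biprod_zero {X Z : C} (hZ : IsZero Z) : X ⊞ Z ≅ X := by
  refine ⟨biprod.fst, biprod.lift (𝟙 X) 0, ?_, by simp⟩
  apply biprod.hom_ext
  · simp
  · exact hZ.eq_of_tgt _ _

/-- Decomposing a finite biproduct over `Fin (n+1)`. -/
noncomputable def auxBiprodFinSucc {n : ℕ} (f : Fin (n + 1) → C) :
    (⨁ f) ≅ f 0 ⊞ (⨁ fun i : Fin n => f i.succ) := by
  have hA : biproduct.ι f 0 ≫
      biprod.lift (biproduct.π f 0) (biproduct.lift fun j : Fin n => biproduct.π f j.succ) =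
      biprod.inl := by
    apply biprod.hom_ext
    · simp
    · rw [Category.assoc, biprod.lift_snd, biprod.inl_snd]
      apply biproduct.hom_ext
      intro j'
      rw [Category.assoc, biproduct.lift_π, zero_comp]
      exact biproduct.ι_π_ne f (Fin.succ_ne_zero j').symm
  have hB : ∀ j : Fin n, biproduct.ι f j.succ ≫
      biprod.lift (biproduct.π f 0) (biproduct.lift fun j : Fin n => biproduct.π f j.succ) =
      biproduct.ι (fun i : Fin n => f i.succ) j ≫ biprod.inr := by
    intro j
    apply biprod.hom_ext
    · rw [Category.assoc, biprod.lift_fst, Category.assoc, biprod.inr_fst, comp_zero]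
      exact biproduct.ι_π_ne f (Fin.succ_ne_zero j)
    · rw [Category.assoc, biprod.lift_snd, Category.assoc, biprod.inr_snd, Category.comp_id]
      apply biproduct.hom_ext
      intro j'
      rw [Category.assoc, biproduct.lift_π]
      by_cases hjj : j = j'
      · subst hjj
        rw [biproduct.ι_π_self, biproduct.ι_π_self]
      · rw [biproduct.ι_π_ne f (fun hcon => hjj (Fin.succ_injective _ hcon)),
          biproduct.ι_π_ne _ hjj]
  refine ⟨biprod.lift (biproduct.π f 0) (biproduct.lift fun j : Fin n => biproduct.π f j.succ),
    biprod.desc (biproduct.ι f 0) (biproduct.desc fun j : Fin n => biproduct.ι f j.succ), ?_, ?_⟩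
  · rw [biprod.lift_desc, biproduct.lift_desc, ← biproduct.total, Fin.sum_univ_succ]
  · apply biprod.hom_ext'
    · rw [biprod.inl_desc_assoc, Category.comp_id, hA]
    · rw [biprod.inr_desc_assoc, Category.comp_id]
      apply biproduct.hom_ext'
      intro j
      rw [biproduct.ι_desc_assoc, hB j]

lemma aux_isZero_biproduct_empty (f : Fin 0 → C) : IsZero (⨁ f) := by
  rw [IsZero.iff_id_eq_zero]
  apply biproduct.hom_ext
  intro j
  exact j.elim0

lemma aux_subcat_biproduct {S : C → Prop} (hS : IsAdditiveSubcat S)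
    (hz : ∀ Z : C, IsZero Z → S Z) :
    ∀ (n : ℕ) (f : Fin n → C), (∀ i, S (f i)) → S (⨁ f) := by
  intro n
  induction n with
  | zero => intro f _; exact hz _ (aux_isZero_biproduct_empty f)
  | succ m ih =>
      intro f hf
      exact hS.of_iso (auxBiprodFinSucc f).symm
        (hS.sum_mem (hf 0) (ih _ fun i => hf i.succ))

lemma aux_not_isZero_of_local {B : C} (h : IsLocalRing (End B)) : ¬ IsZero B := by
  intro hz
  exact one_ne_zero (α := End B) (hz.eq_of_src (𝟙 B) 0)

lemma aux_idem_eq_id {B : C} (p : B ⟶ B) (hp : p ≫ p = p) (hu : IsIso p) : p = 𝟙 B := by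
  rw [← cancel_epi p, hp, Category.comp_id]

lemma aux_indec_of_local {B : C} (h : IsLocalRing (End B)) : Indecomposable B := by
  refine ⟨aux_not_isZero_of_local h, ?_⟩
  intro U V e
  set p : End B := e.hom ≫ biprod.fst ≫ biprod.inl ≫ e.inv with hpdef
  have hidem : p ≫ p = p := by
    simp only [hpdef, Category.assoc, Iso.inv_hom_id_assoc, biprod.inl_fst_assoc]
  have hidem_mul : p * p = p := by
    rw [End.mul_def]
    exact hidem
  have hsum : p + ((1 : End B) - p) = 1 := by abel
  rcases IsLocalRing.isUnit_or_isUnit_of_add_one hsum with hu | hu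
  · right
    have hp1 : p = 1 := hu.mul_left_cancel (by rw [mul_one, hidem_mul])
    have hp1' : p = 𝟙 B := hp1
    rw [IsZero.iff_id_eq_zero]
    have hcalc : 𝟙 V = (biprod.inr ≫ e.inv) ≫ p ≫ (e.hom ≫ biprod.snd) := by
      rw [hp1']
      simp
    rw [hcalc, hpdef]
    simp
  · left
    have hq : ((1 : End B) - p) * ((1 : End B) - p) = (1 : End B) - p := by
      rw [mul_sub, mul_one, sub_mul, one_mul, hidem_mul, sub_self, sub_zero]
    have hq1 : (1 : End B) - p = 1 := hu.mul_left_cancel (by rw [mul_one, hq])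
    have hp0 : p = 0 := sub_eq_self.1 hq1
    rw [IsZero.iff_id_eq_zero]
    have hcalc : 𝟙 U = (biprod.inl ≫ e.inv) ≫ p ≫ (e.hom ≫ biprod.fst) := by
      rw [hpdef]
      simp
    rw [hcalc, hp0]
    simp

lemma aux_local_of_iso {X Z : C} (e : X ≅ Z) (h : IsLocalRing (End X)) :
    IsLocalRing (End Z) := by
  have hnt : Nontrivial (End Z) := by
    refine ⟨1, 0, fun h10 => ?_⟩
    apply one_ne_zero (α := End X)
    have h1 : (1 : End X) = e.hom ≫ (1 : End Z) ≫ e.inv := by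
      rw [End.one_def, End.one_def]
      simp
    rw [h1, h10]
    show e.hom ≫ (0 : Z ⟶ Z) ≫ e.inv = (0 : X ⟶ X)
    simp
  have key : ∀ x : End Z, IsUnit (show End X from e.hom ≫ x ≫ e.inv) → IsUnit x := by
    intro x hx
    have hx' : IsIso (show X ⟶ X from e.hom ≫ x ≫ e.inv) :=
      (isUnit_iff_isIso (show End X from e.hom ≫ x ≫ e.inv)).1 hx
    have hxeq : (x : Z ⟶ Z) = e.inv ≫ (e.hom ≫ x ≫ e.inv) ≫ e.hom := by simp
    have hix : IsIso (x : Z ⟶ Z) := by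
      rw [hxeq]
      infer_instance
    exact (isUnit_iff_isIso x).2 hix
  refine { toNontrivial := hnt, isUnit_or_isUnit_of_add_one := ?_ }
  intro a b hab
  have hsum2 : (show End X from e.hom ≫ a ≫ e.inv) + (show End X from e.hom ≫ b ≫ e.inv) = 1 := by
    have hdist : (show End X from e.hom ≫ a ≫ e.inv) + (show End X from e.hom ≫ b ≫ e.inv) =
        (show End X from e.hom ≫ (a + b) ≫ e.inv) := by
      show e.hom ≫ a ≫ e.inv + e.hom ≫ b ≫ e.inv = e.hom ≫ (a + b) ≫ e.inv
      rw [Preadditive.add_comp, Preadditive.comp_add]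
    rw [hdist, hab, End.one_def, End.one_def]
    show e.hom ≫ 𝟙 Z ≫ e.inv = 𝟙 X
    simp
  rcases IsLocalRing.isUnit_or_isUnit_of_add_one hsum2 with hh | hh
  · exact Or.inl (key a hh)
  · exact Or.inr (key b hh)

lemma aux_local_end_of_indec (hKS : IsKrullSchmidt C) {A : C} (hA : Indecomposable A) :
    IsLocalRing (End A) := by
  obtain ⟨n, f, hloc, ⟨e⟩⟩ := hKS A hA.1
  cases n with
  | zero => exact absurd ((aux_isZero_biproduct_empty f).of_iso e) hA.1
  | succ m =>
      have e' : A ≅ f 0 ⊞ (⨁ fun i : Fin m => f i.succ) := e.trans (auxBiprodFinSucc f)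
      rcases hA.2 _ _ e' with h0 | hT
      · exact absurd h0 (aux_not_isZero_of_local (hloc 0))
      · exact aux_local_of_iso (e'.trans (aux_iso_biprod_zero hT)).symm (hloc 0)

lemma aux_mono_of_fac {X Z W : C} (f : X ⟶ Z) (g : Z ⟶ W) (h : Mono (f ≫ g)) : Mono f :=
  mono_of_mono f g

/-- A split epi endomorphism of an object with Hom-finite endomorphisms is an isomorphism. -/
lemma aux_isIso_of_split_epi_endo (k : Type*) [Field k] [Linear k C] {P : C}
    (hfin : Module.Finite k (P ⟶ P)) (φ σ : P ⟶ P) (h : σ ≫ φ = 𝟙 P) : IsIso φ := by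
  have hmono : Mono σ := by
    have : Mono (σ ≫ φ) := by rw [h]; infer_instance
    exact mono_of_mono σ φ
  let L : (P ⟶ P) →ₗ[k] (P ⟶ P) :=
    { toFun := fun x => x ≫ σ
      map_add' := fun x y => Preadditive.add_comp _ _ _ _ _ _
      map_smul' := fun r x => Linear.smul_comp _ _ _ _ _ _ }
  have hinj : Function.Injective L := by
    intro x y hxy
    exact (cancel_mono σ).1 hxy
  letI : Module.Finite k (P ⟶ P) := hfin
  have hsurj : Function.Surjective L := LinearMap.injective_iff_surjective.1 hinj
  obtain ⟨x, hx⟩ := hsurj (𝟙 P)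
  have hx' : x ≫ σ = 𝟙 P := hx
  have hxφ : x = φ := by
    calc x = x ≫ (σ ≫ φ) := by rw [h, Category.comp_id]
      _ = (x ≫ σ) ≫ φ := by rw [Category.assoc]
      _ = φ := by rw [hx', Category.id_comp]
  exact ⟨σ, by rw [← hxφ, hx'], h⟩

end AuxSplit

section AuxExt

open CategoryTheory.Abelian.Pseudoelement

variable {C : Type u} [Category.{v} C] [Abelian C]
variable (k : Type*) [Field k] [Linear k C] [EnoughProjectives C]

/-- Vanishing of the derived-functor `Ext^{n+1}` implies that cocycles on a projective
resolution are coboundaries. -/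
lemma aux_cocycle {X N : C} (P : ProjectiveResolution X) (n : ℕ)
    (h : extVanishes k (n + 1) X N) (φ : P.complex.X (n + 1) ⟶ N)
    (hφ : P.complex.d (n + 2) (n + 1) ≫ φ = 0) :
    ∃ ψ : P.complex.X n ⟶ N, P.complex.d (n + 1) n ≫ ψ = φ := by
  set K := P.complex.linearYonedaObj k N with hK
  have hzero : IsZero (K.homology (n + 1)) :=
    IsZero.of_iso h (P.isoExt (n + 1) N).symm
  have hex : K.ExactAt (n + 1) := (K.exactAt_iff_isZero_homology _).2 hzero
  rw [K.exactAt_iff' n (n + 1) (n + 2) (by simp) (by simp)] at hex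
  rw [ShortComplex.moduleCat_exact_iff] at hex
  obtain ⟨ψ, hψ⟩ := hex φ hφ
  exact ⟨ψ, hψ⟩

/-- Vanishing `Ext¹(X, Z) = 0` implies every short exact sequence `0 → Z → E → X → 0` splits. -/
lemma aux_ext1_split {X Z : C} (h : extVanishes k 1 X Z) : Ext1Vanishes X Z := by
  intro E u v hIs
  obtain ⟨wE, hse⟩ := hIs
  have := hse.mono_f
  have := hse.epi_g
  set P : ProjectiveResolution X := ProjectiveResolution.of X with hP
  set π : P.complex.X 0 ⟶ X := P.π.f 0 with hπ
  have hEπ : Epi π := (inferInstance : Epi (P.π.f 0))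
  have w0 : P.complex.d 1 0 ≫ π = 0 := P.complex_d_comp_π_f_zero
  have exact₀ : (ShortComplex.mk (P.complex.d 1 0) π w0).Exact := P.exact₀
  set ℓ₀ : P.complex.X 0 ⟶ E := Projective.factorThru π v with hℓ₀
  have hℓ₀v : ℓ₀ ≫ v = π := Projective.factorThru_comp π v
  have hlift0 : (P.complex.d 1 0 ≫ ℓ₀) ≫ v = 0 := by
    rw [Category.assoc, hℓ₀v, w0]
  set φ : P.complex.X 1 ⟶ Z := hse.exact.lift (P.complex.d 1 0 ≫ ℓ₀) hlift0 with hφdef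
  have hφu : φ ≫ u = P.complex.d 1 0 ≫ ℓ₀ := hse.exact.lift_f _ _
  have hcoc : P.complex.d 2 1 ≫ φ = 0 := by
    rw [← cancel_mono u, Category.assoc, hφu, zero_comp,
      ← Category.assoc, HomologicalComplex.d_comp_d, zero_comp]
  obtain ⟨ψ, hψ⟩ := aux_cocycle k P 0 h φ hcoc
  set ℓ : P.complex.X 0 ⟶ E := ℓ₀ - ψ ≫ u with hℓ
  have hdℓ : P.complex.d 1 0 ≫ ℓ = 0 := by
    rw [hℓ, Preadditive.comp_sub, ← Category.assoc, hψ, hφu, sub_self]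
  set σ : X ⟶ E := exact₀.desc ℓ hdℓ with hσ
  have hπσ : π ≫ σ = ℓ := exact₀.g_desc _ _
  refine ⟨σ, ?_⟩
  rw [← cancel_epi π, ← Category.assoc, hπσ, hℓ, Preadditive.sub_comp,
    hℓ₀v, Category.assoc, wE, comp_zero, sub_zero, Category.comp_id]

/-- Gluing lemma: given short exact sequences `0 → N → X₁ → D → 0` and `0 → I → D → Mo → 0`
together with a lifting `ε : I ⟶ X₁` of `κ`, the induced sequence
`0 → N → X₁/I → Mo → 0` is short exact. -/
lemma aux_glue {N I D Mo X₁ : C} {u₁ : N ⟶ X₁} {V : X₁ ⟶ D} {w₁ : u₁ ≫ V = 0}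
    (h₁ : (ShortComplex.mk u₁ V w₁).ShortExact)
    {κ : I ⟶ D} {q : D ⟶ Mo} {w₂ : κ ≫ q = 0}
    (h₂ : (ShortComplex.mk κ q w₂).ShortExact)
    (ε : I ⟶ X₁) (hεV : ε ≫ V = κ) :
    IsSES (u₁ ≫ cokernel.π ε)
      (cokernel.desc ε (V ≫ q) (by rw [← Category.assoc, hεV, w₂])) := by
  have hmκ := h₂.mono_f
  have hmu := h₁.mono_f
  have heV := h₁.epi_g
  have heq := h₂.epi_g
  have hmε : Mono ε := by
    have : Mono (ε ≫ V) := by rw [hεV]; infer_instance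
    exact mono_of_mono ε V
  set c := cokernel.π ε with hc
  set v₂ := cokernel.desc ε (V ≫ q) (by rw [← Category.assoc, hεV, w₂]) with hv₂
  have hcv₂ : c ≫ v₂ = V ≫ q := cokernel.π_desc _ _ _
  have exact₃ : (ShortComplex.mk ε c (cokernel.condition ε)).Exact :=
    ShortComplex.exact_of_g_is_cokernel _ (cokernelIsCokernel ε)
  have w : (u₁ ≫ c) ≫ v₂ = 0 := by
    rw [Category.assoc, hcv₂, ← Category.assoc, w₁, zero_comp]
  -- mono
  have hmono : Mono (u₁ ≫ c) := by
    rw [Preadditive.mono_iff_cancel_zero]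
    intro T t ht
    have htc : (t ≫ u₁) ≫ c = 0 := by rw [Category.assoc]; exact ht
    set z : T ⟶ I := exact₃.lift (t ≫ u₁) htc with hz
    have hzε : z ≫ ε = t ≫ u₁ := exact₃.lift_f _ _
    have hzκ : z ≫ κ = 0 := by
      rw [← hεV, ← Category.assoc, hzε, Category.assoc, w₁, comp_zero]
    have hz0 : z = 0 := by
      rw [← cancel_mono κ, hzκ, zero_comp]
    have : t ≫ u₁ = 0 := by rw [← hzε, hz0, zero_comp]
    rw [← cancel_mono u₁, zero_comp]
    exact this
  -- epi
  have hepi : Epi v₂ := by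
    have : Epi (c ≫ v₂) := by
      rw [hcv₂]
      exact epi_comp V q
    exact epi_of_epi c v₂
  -- exact, via pseudoelements
  have hexact : (ShortComplex.mk (u₁ ≫ c) v₂ w).Exact := by
    apply exact_of_pseudo_exact
    intro x' hx'
    obtain ⟨x, hx⟩ := pseudo_surjective_of_epi c x'
    have h1 : pseudoApply q (pseudoApply V x) = 0 := by
      rw [← Abelian.Pseudoelement.comp_apply, ← hcv₂, Abelian.Pseudoelement.comp_apply, hx]
      exact hx'
    obtain ⟨i, hi⟩ := pseudo_exact_of_exact h₂.exact _ h1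
    have h2 : pseudoApply V x = pseudoApply V (pseudoApply ε i) := by
      rw [← Abelian.Pseudoelement.comp_apply, hεV]
      exact hi.symm
    obtain ⟨z, hz0, hzprop⟩ := sub_of_eq_image V x (pseudoApply ε i) h2
    have hcy : pseudoApply c (pseudoApply ε i) = 0 := by
      rw [← Abelian.Pseudoelement.comp_apply, cokernel.condition,
        Abelian.Pseudoelement.zero_apply]
    have hcz : pseudoApply c z = x' := by
      rw [hzprop _ c hcy, hx]
    obtain ⟨nn, hnn⟩ := pseudo_exact_of_exact h₁.exact z hz0
    refine ⟨nn, ?_⟩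
    rw [Abelian.Pseudoelement.comp_apply, hnn, hcz]
  exact ⟨w, ShortComplex.ShortExact.mk' hexact hmono hepi⟩

/-- Extending a morphism along a monomorphism whose cokernel `X` satisfies
`Ext¹(X, N) = 0`. -/
lemma aux_extend {Z E X N : C} {u : Z ⟶ E} {v : E ⟶ X} (wE : u ≫ v = 0)
    (hse : (ShortComplex.mk u v wE).ShortExact) (h : Z ⟶ N)
    (hEV : Ext1Vanishes X N) : ∃ t : E ⟶ N, u ≫ t = h := by
  have := hse.mono_f
  have := hse.epi_g
  -- SES₁ : 0 → N → N ⊞ E → E → 0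
  have w₁ : (biprod.inl : N ⟶ N ⊞ E) ≫ biprod.snd = 0 := biprod.inl_snd
  have h₁ : (ShortComplex.mk (biprod.inl : N ⟶ N ⊞ E) biprod.snd w₁).ShortExact := by
    have hmono : Mono (biprod.inl : N ⟶ N ⊞ E) := by
      have : Mono ((biprod.inl : N ⟶ N ⊞ E) ≫ biprod.fst) := by
        rw [biprod.inl_fst]; infer_instance
      exact mono_of_mono _ biprod.fst
    have hepi : Epi (biprod.snd : N ⊞ E ⟶ E) := by
      have : Epi ((biprod.inr : E ⟶ N ⊞ E) ≫ biprod.snd) := by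
        rw [biprod.inr_snd]; infer_instance
      exact epi_of_epi biprod.inr _
    exact ShortComplex.ShortExact.mk'
      (ShortComplex.Splitting.ofHasBinaryBiproduct N E).exact hmono hepi
  set ε : Z ⟶ N ⊞ E := biprod.lift (-h) u with hεdef
  have hεV : ε ≫ biprod.snd = u := biprod.lift_snd _ _
  have glue := aux_glue h₁ hse ε hεV
  obtain ⟨wG, hseG⟩ := glue
  obtain ⟨sX, hsX⟩ := hEV _ _ _ ⟨wG, hseG⟩
  have spl := ShortComplex.Splitting.ofExactOfSection _ hseG.exact sX hsX hseG.mono_f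
  have hr : (biprod.inl ≫ cokernel.π ε) ≫ spl.r = 𝟙 N := spl.f_r
  refine ⟨biprod.inr ≫ cokernel.π ε ≫ spl.r, ?_⟩
  have hεc : ε ≫ cokernel.π ε = 0 := cokernel.condition ε
  have hexp : ε = (-h) ≫ biprod.inl + u ≫ biprod.inr := by
    apply biprod.hom_ext <;> simp [hεdef]
  have key : u ≫ biprod.inr ≫ cokernel.π ε = h ≫ biprod.inl ≫ cokernel.π ε := by
    have h0 : ((-h) ≫ biprod.inl + u ≫ biprod.inr) ≫ cokernel.π ε = 0 := by
      rw [← hexp]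
      exact hεc
    rw [Preadditive.add_comp, Category.assoc, Category.assoc,
      Preadditive.neg_comp] at h0
    exact (neg_add_eq_zero.1 h0).symm
  calc u ≫ biprod.inr ≫ cokernel.π ε ≫ spl.r
      = (u ≫ biprod.inr ≫ cokernel.π ε) ≫ spl.r := by simp only [Category.assoc]
    _ = (h ≫ biprod.inl ≫ cokernel.π ε) ≫ spl.r := by rw [key]
    _ = h ≫ (biprod.inl ≫ cokernel.π ε) ≫ spl.r := by simp only [Category.assoc]
    _ = h := by rw [hr, Category.comp_id]

/-- The key homological lemma: if `0 → A' → M¹ → M² → 0` is exact,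
`Ext¹(M¹, N) = 0` (in the splitting sense) and the derived functor `Ext²(M², N)`
vanishes, then `Ext¹(A', N) = 0` in the splitting sense. -/
lemma aux_lemB {A' M₁ M₂ N : C} {a : A' ⟶ M₁} {b : M₁ ⟶ M₂} (wA : a ≫ b = 0)
    (hseA : (ShortComplex.mk a b wA).ShortExact)
    (hM : Ext1Vanishes M₁ N) (h2 : extVanishes k 2 M₂ N) :
    Ext1Vanishes A' N := by
  intro E u v hIs
  obtain ⟨wE, hseE⟩ := hIs
  have := hseE.mono_f
  have := hseE.epi_g
  have := hseA.mono_f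
  have := hseA.epi_g
  -- projective resolution of M₂
  set P : ProjectiveResolution M₂ := ProjectiveResolution.of M₂ with hP
  set π : P.complex.X 0 ⟶ M₂ := P.π.f 0 with hπdef
  have hEπ : Epi π := (inferInstance : Epi (P.π.f 0))
  have w0 : P.complex.d 1 0 ≫ π = 0 := P.complex_d_comp_π_f_zero
  have exact₀ : (ShortComplex.mk (P.complex.d 1 0) π w0).Exact := P.exact₀
  -- the comparison maps
  set l0 : P.complex.X 0 ⟶ M₁ := Projective.factorThru π b with hl0def
  have hl0b : l0 ≫ b = π := Projective.factorThru_comp π b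
  have hd1l : (P.complex.d 1 0 ≫ l0) ≫ b = 0 := by rw [Category.assoc, hl0b, w0]
  set μ : P.complex.X 1 ⟶ A' := hseA.exact.lift (P.complex.d 1 0 ≫ l0) hd1l with hμdef
  have hμa : μ ≫ a = P.complex.d 1 0 ≫ l0 := hseA.exact.lift_f _ _
  set ν : P.complex.X 1 ⟶ E := Projective.factorThru μ v with hνdef
  have hνv : ν ≫ v = μ := Projective.factorThru_comp μ v
  have hd₂μ : P.complex.d 2 1 ≫ μ = 0 := by
    rw [← cancel_mono a, Category.assoc, hμa, ← Category.assoc,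
      HomologicalComplex.d_comp_d, zero_comp, zero_comp]
  have hd₂ν : (P.complex.d 2 1 ≫ ν) ≫ v = 0 := by
    rw [Category.assoc, hνv, hd₂μ]
  set φ : P.complex.X 2 ⟶ N := hseE.exact.lift (P.complex.d 2 1 ≫ ν) hd₂ν with hφdef
  have hφu : φ ≫ u = P.complex.d 2 1 ≫ ν := hseE.exact.lift_f _ _
  have hcoc : P.complex.d 3 2 ≫ φ = 0 := by
    rw [← cancel_mono u, Category.assoc, hφu, ← Category.assoc,
      HomologicalComplex.d_comp_d, zero_comp, zero_comp]
  obtain ⟨ψ, hψ⟩ := aux_cocycle k P 1 h2 φ hcoc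
  set ν' : P.complex.X 1 ⟶ E := ν - ψ ≫ u with hν'def
  have hν'v : ν' ≫ v = μ := by
    rw [hν'def, Preadditive.sub_comp, hνv, Category.assoc, wE, comp_zero, sub_zero]
  have hd₂ν' : P.complex.d 2 1 ≫ ν' = 0 := by
    rw [hν'def, Preadditive.comp_sub, ← Category.assoc, hψ, hφu, sub_self]
  -- the syzygy I
  set I : C := kernel π with hIdef
  set ιI : I ⟶ P.complex.X 0 := kernel.ι π with hιIdef
  set q : P.complex.X 1 ⟶ I := kernel.lift π (P.complex.d 1 0) w0 with hqdef
  have hqι : q ≫ ιI = P.complex.d 1 0 := kernel.lift_ι _ _ _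
  have hEq : Epi q := by
    have := exact₀
    rw [ShortComplex.exact_iff_epi_kernel_lift] at this
    exact this
  have w21q : P.complex.d 2 1 ≫ q = 0 := by
    rw [← cancel_mono ιI, Category.assoc, hqι, HomologicalComplex.d_comp_d, zero_comp]
  have exact21q : (ShortComplex.mk (P.complex.d 2 1) q w21q).Exact := by
    apply CategoryTheory.Abelian.Pseudoelement.exact_of_pseudo_exact
    intro y hy
    have hd : CategoryTheory.Abelian.Pseudoelement.pseudoApply (P.complex.d 1 0) y = 0 := by
      rw [← hqι, CategoryTheory.Abelian.Pseudoelement.comp_apply, hy,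
        CategoryTheory.Abelian.Pseudoelement.apply_zero]
    exact CategoryTheory.Abelian.Pseudoelement.pseudo_exact_of_exact (P.exact_succ 0) y hd
  set ρ : I ⟶ E := exact21q.desc ν' hd₂ν' with hρdef
  have hqρ : q ≫ ρ = ν' := exact21q.g_desc _ _
  set μ' : I ⟶ A' := exact21q.desc μ hd₂μ with hμ'def
  have hqμ' : q ≫ μ' = μ := exact21q.g_desc _ _
  have hρv : ρ ≫ v = μ' := by
    rw [← cancel_epi q, ← Category.assoc, hqρ, hν'v, hqμ']
  have hμ'a : μ' ≫ a = ιI ≫ l0 := by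
    rw [← cancel_epi q, ← Category.assoc, hqμ', hμa, ← hqι, Category.assoc]
  -- the pullback D
  set D : C := pullback b π with hDdef
  have hκcond : (0 : I ⟶ M₁) ≫ b = ιI ≫ π := by
    rw [zero_comp, hιIdef, kernel.condition]
  set κ : I ⟶ D := pullback.lift 0 ιI hκcond with hκdef
  have hκfst : κ ≫ pullback.fst b π = 0 := pullback.lift_fst _ _ _
  have hκsnd : κ ≫ pullback.snd b π = ιI := pullback.lift_snd _ _ _
  have hmκ : Mono κ := by
    have : Mono (κ ≫ pullback.snd b π) := by
      rw [hκsnd]; infer_instance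
    exact mono_of_mono κ (pullback.snd b π)
  have hEfst : Epi (pullback.fst b π) := inferInstance
  have h₂SE : (ShortComplex.mk κ (pullback.fst b π) hκfst).ShortExact := by
    refine ShortComplex.ShortExact.mk' ?_ hmκ hEfst
    apply ShortComplex.exact_of_f_is_kernel
    refine KernelFork.IsLimit.ofι' κ hκfst (fun {T} x hx => ⟨?_, ?_⟩)
    · refine kernel.lift π (x ≫ pullback.snd b π) ?_
      rw [Category.assoc, ← pullback.condition, ← Category.assoc, hx, zero_comp]
    · apply pullback.hom_ext
      · rw [Category.assoc, hκfst, comp_zero, hx]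
      · rw [Category.assoc, hκsnd, hιIdef, kernel.lift_ι]
  -- the maps into D
  have he₁cond : a ≫ b = (0 : A' ⟶ P.complex.X 0) ≫ π := by rw [wA, zero_comp]
  set e₁ : A' ⟶ D := pullback.lift a 0 he₁cond with he₁def
  have he₁fst : e₁ ≫ pullback.fst b π = a := pullback.lift_fst _ _ _
  have he₁snd : e₁ ≫ pullback.snd b π = 0 := pullback.lift_snd _ _ _
  have hme₁ : Mono e₁ := by
    have : Mono (e₁ ≫ pullback.fst b π) := by rw [he₁fst]; infer_instance
    exact mono_of_mono e₁ (pullback.fst b π)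
  have hτcond : l0 ≫ b = (𝟙 (P.complex.X 0)) ≫ π := by rw [hl0b, Category.id_comp]
  set τ : P.complex.X 0 ⟶ D := pullback.lift l0 (𝟙 _) hτcond with hτdef
  have hτfst : τ ≫ pullback.fst b π = l0 := pullback.lift_fst _ _ _
  have hτsnd : τ ≫ pullback.snd b π = 𝟙 _ := pullback.lift_snd _ _ _
  -- exactness of 0 → A' → D → P₀ → 0
  have exact_e₁ : (ShortComplex.mk e₁ (pullback.snd b π) he₁snd).Exact := by
    apply ShortComplex.exact_of_f_is_kernel
    refine KernelFork.IsLimit.ofι' e₁ he₁snd (fun {T} x hx => ⟨?_, ?_⟩)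
    · refine hseA.exact.lift (x ≫ pullback.fst b π) ?_
      rw [Category.assoc, pullback.condition, ← Category.assoc, hx, zero_comp]
    · apply pullback.hom_ext
      · rw [Category.assoc, he₁fst]
        exact hseA.exact.lift_f _ _
      · rw [Category.assoc, he₁snd, comp_zero, hx]
  set rD : D ⟶ A' := exact_e₁.lift (𝟙 D - pullback.snd b π ≫ τ)
    (by rw [Preadditive.sub_comp, Category.id_comp, Category.assoc, hτsnd,
      Category.comp_id, sub_self]) with hrDdef
  have hrDe₁ : rD ≫ e₁ = 𝟙 D - pullback.snd b π ≫ τ := exact_e₁.lift_f _ _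
  have he₁rD : e₁ ≫ rD = 𝟙 A' := by
    rw [← cancel_mono e₁, Category.assoc, hrDe₁, Preadditive.comp_sub,
      Category.comp_id, ← Category.assoc, he₁snd, zero_comp, sub_zero, Category.id_comp]
  have hτrD : τ ≫ rD = 0 := by
    rw [← cancel_mono e₁, Category.assoc, hrDe₁, Preadditive.comp_sub,
      Category.comp_id, ← Category.assoc, hτsnd, Category.id_comp, sub_self, zero_comp]
  -- Ξ : A' ⊞ P₀ ≅ D
  set Ξ : A' ⊞ P.complex.X 0 ⟶ D := biprod.desc e₁ τ with hΞdef
  have hΞiso : IsIso Ξ := by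
    refine ⟨biprod.lift rD (pullback.snd b π), ?_, ?_⟩
    · apply biprod.hom_ext'
      · apply biprod.hom_ext
        · simp [hΞdef, he₁rD]
        · simp [hΞdef, he₁snd]
      · apply biprod.hom_ext
        · simp [hΞdef, hτrD]
        · simp [hΞdef, hτsnd]
    · rw [biprod.lift_desc, hrDe₁]
      abel
  -- SES₁ : 0 → N → E ⊞ P₀ → D → 0
  set V : E ⊞ P.complex.X 0 ⟶ D := biprod.desc (v ≫ e₁) τ with hVdef
  have w₁ : (u ≫ biprod.inl) ≫ V = 0 := by
    rw [Category.assoc, hVdef, biprod.inl_desc, ← Category.assoc, wE, zero_comp]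
  have hmu' : Mono (u ≫ biprod.inl : N ⟶ E ⊞ P.complex.X 0) := by
    have h1 : Mono (biprod.inl : E ⟶ E ⊞ P.complex.X 0) := by
      have : Mono ((biprod.inl : E ⟶ E ⊞ P.complex.X 0) ≫ biprod.fst) := by
        rw [biprod.inl_fst]; infer_instance
      exact mono_of_mono _ biprod.fst
    exact mono_comp u biprod.inl
  have hVfac : biprod.map v (𝟙 (P.complex.X 0)) ≫ Ξ = V := by
    apply biprod.hom_ext' <;> simp [hΞdef, hVdef]
  have hEmap : Epi (biprod.map v (𝟙 (P.complex.X 0))) := by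
    rw [Preadditive.epi_iff_cancel_zero]
    intro R h hh
    have h1 : v ≫ (biprod.inl ≫ h) = v ≫ 0 := by
      rw [comp_zero]
      calc v ≫ biprod.inl ≫ h
          = (v ≫ biprod.inl) ≫ h := by rw [Category.assoc]
        _ = (biprod.inl ≫ biprod.map v (𝟙 (P.complex.X 0))) ≫ h := by rw [biprod.inl_map]
        _ = biprod.inl ≫ (biprod.map v (𝟙 (P.complex.X 0)) ≫ h) := by rw [Category.assoc]
        _ = 0 := by rw [hh, comp_zero]
    have h1' : biprod.inl ≫ h = 0 := (cancel_epi v).1 h1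
    have h2 : biprod.inr ≫ h = 0 := by
      calc biprod.inr ≫ h
          = (biprod.inr ≫ biprod.map v (𝟙 (P.complex.X 0))) ≫ h := by
            rw [biprod.inr_map, Category.id_comp]
        _ = biprod.inr ≫ (biprod.map v (𝟙 (P.complex.X 0)) ≫ h) := by rw [Category.assoc]
        _ = 0 := by rw [hh, comp_zero]
    apply biprod.hom_ext'
    · rw [h1', comp_zero]
    · rw [h2, comp_zero]
  have hEV' : Epi V := by
    rw [← hVfac]
    have := hΞiso
    exact epi_comp _ _
  have h₁SE : (ShortComplex.mk (u ≫ biprod.inl) V w₁).ShortExact := by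
    refine ShortComplex.ShortExact.mk' ?_ hmu' hEV'
    apply ShortComplex.exact_of_f_is_kernel
    refine KernelFork.IsLimit.ofι' _ w₁ (fun {T} x hx => ⟨?_, ?_⟩)
    · -- the lift
      refine hseE.exact.lift (x ≫ biprod.fst) ?_
      -- (x ≫ fst) ≫ v = 0
      have hxsnd : x ≫ biprod.snd = 0 := by
        have : (x ≫ V) ≫ pullback.snd b π = 0 := by rw [hx, zero_comp]
        rw [Category.assoc] at this
        have hVsnd : V ≫ pullback.snd b π = biprod.snd := by
          apply biprod.hom_ext'
          · simp [hVdef, he₁snd]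
          · simp [hVdef, hτsnd]
        rwa [hVsnd] at this
      have hxtot : x = (x ≫ biprod.fst) ≫ biprod.inl := by
        have := biprod.total (X := E) (Y := P.complex.X 0)
        calc x = x ≫ 𝟙 _ := by rw [Category.comp_id]
          _ = x ≫ (biprod.fst ≫ biprod.inl + biprod.snd ≫ biprod.inr) := by rw [this]
          _ = (x ≫ biprod.fst) ≫ biprod.inl + (x ≫ biprod.snd) ≫ biprod.inr := by
              rw [Preadditive.comp_add, Category.assoc, Category.assoc]
          _ = (x ≫ biprod.fst) ≫ biprod.inl := by rw [hxsnd, zero_comp, add_zero]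
      have : ((x ≫ biprod.fst) ≫ v) ≫ e₁ = 0 := by
        have hx' : (x ≫ biprod.fst) ≫ (biprod.inl ≫ V) = 0 := by
          rw [← Category.assoc, ← hxtot, hx]
        rw [hVdef, biprod.inl_desc] at hx'
        rw [Category.assoc]
        exact hx'
      rw [← cancel_mono e₁, zero_comp]
      exact this
    · -- fac
      have hxsnd : x ≫ biprod.snd = 0 := by
        have : (x ≫ V) ≫ pullback.snd b π = 0 := by rw [hx, zero_comp]
        rw [Category.assoc] at this
        have hVsnd : V ≫ pullback.snd b π = biprod.snd := by
          apply biprod.hom_ext'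
          · simp [hVdef, he₁snd]
          · simp [hVdef, hτsnd]
        rwa [hVsnd] at this
      have hxtot : x = (x ≫ biprod.fst) ≫ biprod.inl := by
        have := biprod.total (X := E) (Y := P.complex.X 0)
        calc x = x ≫ 𝟙 _ := by rw [Category.comp_id]
          _ = x ≫ (biprod.fst ≫ biprod.inl + biprod.snd ≫ biprod.inr) := by rw [this]
          _ = (x ≫ biprod.fst) ≫ biprod.inl + (x ≫ biprod.snd) ≫ biprod.inr := by
              rw [Preadditive.comp_add, Category.assoc, Category.assoc]
          _ = (x ≫ biprod.fst) ≫ biprod.inl := by rw [hxsnd, zero_comp, add_zero]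
      rw [← Category.assoc]
      rw [hseE.exact.lift_f]
      exact hxtot.symm
  -- ε and the gluing
  set ε : I ⟶ E ⊞ P.complex.X 0 := biprod.lift (-ρ) ιI with hεdef
  have hεV : ε ≫ V = κ := by
    have hcalc : ε ≫ V = (-ρ) ≫ (v ≫ e₁) + ιI ≫ τ := by
      rw [hεdef, hVdef, biprod.lift_desc]
    apply pullback.hom_ext
    · rw [hcalc, Preadditive.add_comp, hκfst, Category.assoc, Category.assoc,
        he₁fst, Preadditive.neg_comp, ← Category.assoc, hρv, hμ'a,
        Category.assoc, hτfst, neg_add_cancel]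
    · rw [hcalc, Preadditive.add_comp, hκsnd, Category.assoc, Category.assoc,
        he₁snd, comp_zero, comp_zero, Category.assoc, hτsnd,
        Category.comp_id, zero_add]
  have glue := aux_glue h₁SE h₂SE ε hεV
  obtain ⟨wG, hseG⟩ := glue
  obtain ⟨sM, hsM⟩ := hM _ _ _ ⟨wG, hseG⟩
  have spl := ShortComplex.Splitting.ofExactOfSection _ hseG.exact sM hsM hseG.mono_f
  have hr : ((u ≫ biprod.inl) ≫ cokernel.π ε) ≫ spl.r = 𝟙 N := spl.f_r
  have hru : u ≫ (biprod.inl ≫ cokernel.π ε ≫ spl.r) = 𝟙 N := by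
    rw [← hr]; simp only [Category.assoc]
  have spl2 := ShortComplex.Splitting.ofExactOfRetraction _ hseE.exact
    (biprod.inl ≫ cokernel.π ε ≫ spl.r) hru hseE.epi_g
  exact ⟨spl2.s, spl2.s_g⟩

end AuxExt

theorem stmt7 (k : Type*) [Field k] [Linear k C]
    [EnoughProjectives C] [EnoughInjectives C]
    (hKS : IsKrullSchmidt C) (hfin : ∀ X Y : C, Module.Finite k (X ⟶ Y))
    (M Y : C → Prop) (hfr : IsFullyRigid k M Y) (h2 : IsNRigid k 2 M)
    (A : C) (hA : Indecomposable A) (hAH : MemCoCone M M A)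
    (hAY : NoNonzeroSummandIn Y A)
    {ΩA P : C} (g : ΩA ⟶ P) (f : P ⟶ A) (hses : IsSES g f)
    (hP : Projective P) (hmin : RightMinimal f) :
    Y ΩA := by
  obtain ⟨⟨hcp, hrig⟩, _hMneP, hfull⟩ := hfr
  obtain ⟨wPA, hsePA⟩ := hses
  have hmg := hsePA.mono_f
  have hef := hsePA.epi_g
  have split1 : ∀ X Z : C, M X → M Z → Ext1Vanishes X Z := fun X Z hX hZ =>
    aux_ext1_split k (hrig hX hZ)
  have hzeroY : ∀ Z : C, IsZero Z → Y Z := by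
    obtain ⟨Y₀, M₀, f₀, g₀, hY₀, _, _⟩ := hcp.exists_res A
    exact fun Z hZ => aux_mem_of_isZero hcp.subcatY hY₀ hZ
  have hPM : M P := by
    obtain ⟨Y_P, M_P, iP, πP, hYP, hMP, hsesP⟩ := hcp.exists_res P
    obtain ⟨wp, hsp⟩ := hsesP
    have := hsp.epi_g
    have hsec : Projective.factorThru (𝟙 P) πP ≫ πP = 𝟙 P := Projective.factorThru_comp _ _
    obtain ⟨eiso⟩ := aux_iso_of_section wp hsp hsec
    exact (hcp.subcatM.summands_mem (hcp.subcatM.of_iso eiso hMP)).2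
  have hlocA : IsLocalRing (End A) := aux_local_end_of_indec hKS hA
  -- Key claim: any direct summand of ΩA with local endomorphism ring lies in Y
  have key : ∀ (B : C) (ι : B ⟶ ΩA) (p : ΩA ⟶ B),
      ι ≫ p = 𝟙 B → IsLocalRing (End B) → Y B := by
    intro B ι p hιp hloc
    by_contra hBY
    rcases hfull B (aux_indec_of_local hloc) with hYB | hH
    · exact hBY hYB
    obtain ⟨N₁, N₂, j, bN, hN1, hN2, hsesB⟩ := hH
    obtain ⟨wB, hseB⟩ := hsesB
    have := hseB.mono_f
    have := hseB.epi_g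
    obtain ⟨M₁, M₂, a, b, hM1, hM2, hsesA⟩ := hAH
    obtain ⟨wA, hseA⟩ := hsesA
    have hAN1 : Ext1Vanishes A N₁ :=
      aux_lemB k wA hseA (split1 _ _ hM1 hN1) (h2 2 one_le_two le_rfl hM2 hN1)
    obtain ⟨s, hs⟩ := aux_extend wPA hsePA (p ≫ j) hAN1
    obtain ⟨t, ht⟩ := aux_extend wB hseB (ι ≫ g) (split1 _ _ hN2 hPM)
    have hgsb : g ≫ s ≫ bN = 0 := by
      rw [← Category.assoc, hs, Category.assoc, wB, comp_zero]
    set w : A ⟶ N₂ := hsePA.exact.desc (s ≫ bN) hgsb with hwdef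
    have hfw : f ≫ w = s ≫ bN := hsePA.exact.g_desc _ _
    have hjtf : j ≫ t ≫ f = 0 := by
      rw [← Category.assoc, ht, Category.assoc, wPA, comp_zero]
    set y : N₂ ⟶ A := hseB.exact.desc (t ≫ f) hjtf with hydef
    have hby : bN ≫ y = t ≫ f := hseB.exact.g_desc _ _
    set α : End A := w ≫ y with hαdef
    set δ : P ⟶ P := s ≫ t with hδdef
    have hδf : δ ≫ f = f ≫ α := by
      calc δ ≫ f = s ≫ (t ≫ f) := by rw [hδdef, Category.assoc]
        _ = s ≫ (bN ≫ y) := by rw [← hby]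
        _ = (s ≫ bN) ≫ y := by rw [Category.assoc]
        _ = (f ≫ w) ≫ y := by rw [← hfw]
        _ = f ≫ α := by rw [hαdef, Category.assoc]
    have hgδ : g ≫ δ = p ≫ ι ≫ g := by
      rw [hδdef, ← Category.assoc, hs, Category.assoc, ht]
    have hιgδ : (ι ≫ g) ≫ δ = ι ≫ g := by
      calc (ι ≫ g) ≫ δ = ι ≫ (g ≫ δ) := by rw [Category.assoc]
        _ = ι ≫ (p ≫ ι ≫ g) := by rw [hgδ]
        _ = (ι ≫ p) ≫ (ι ≫ g) := by simp only [Category.assoc]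
        _ = ι ≫ g := by rw [hιp, Category.id_comp]
    have hsum : α + ((1 : End A) - α) = 1 := by abel
    rcases IsLocalRing.isUnit_or_isUnit_of_add_one hsum with hu | hu
    · -- α is an isomorphism: then A ∈ M, and so A ∈ Y, contradicting hAY
      have hαiso : IsIso α := (isUnit_iff_isIso α).1 hu
      have hwsplit : w ≫ (y ≫ inv α) = 𝟙 A := by
        rw [← Category.assoc]
        exact IsIso.hom_inv_id α
      have hmw : Mono w := by
        have : Mono (w ≫ (y ≫ inv α)) := by rw [hwsplit]; infer_instance
        exact mono_of_mono w (y ≫ inv α)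
      have hexw : (ShortComplex.mk w (cokernel.π w) (cokernel.condition w)).ShortExact := by
        refine ShortComplex.ShortExact.mk' ?_ hmw inferInstance
        exact ShortComplex.exact_of_g_is_cokernel _ (cokernelIsCokernel w)
      obtain ⟨eN⟩ := aux_iso_of_retraction (cokernel.condition w) hexw hwsplit
      have hMA : M A := (hcp.subcatM.summands_mem (hcp.subcatM.of_iso eN hN2)).1
      obtain ⟨Y_A, M_A, uA, vA, hYA, hMA', hsesCA⟩ := hcp.exists_cores A
      obtain ⟨wc, hsc⟩ := hsesCA
      obtain ⟨sA, hsA⟩ := split1 _ _ hMA' hMA Y_A uA vA ⟨wc, hsc⟩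
      obtain ⟨eA⟩ := aux_iso_of_section wc hsc hsA
      have hYA' : Y A := (hcp.subcatY.summands_mem (hcp.subcatY.of_iso eA hYA)).1
      obtain ⟨Z0, hZ0⟩ := HasZeroObject.zero (C := C)
      have hz : A ≅ A ⊞ Z0 := (aux_iso_biprod_zero hZ0).symm
      exact hA.1 (hAY A Z0 hz hYA')
    · -- 1 - α is an isomorphism: contradiction with right minimality
      have hiso : IsIso ((1 : End A) - α) := (isUnit_iff_isIso _).1 hu
      set γ : P ⟶ P := Projective.factorThru (f ≫ inv ((1 : End A) - α)) f with hγdef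
      have hγf : γ ≫ f = f ≫ inv ((1 : End A) - α) := Projective.factorThru_comp _ _
      have hfsub : f - f ≫ α = f ≫ ((1 : End A) - α) := by
        rw [Preadditive.comp_sub]
        congr 1
        exact (Category.comp_id f).symm
      have hhf : (γ ≫ (𝟙 P - δ)) ≫ f = f := by
        rw [Category.assoc, Preadditive.sub_comp, Category.id_comp, hδf, hfsub,
          ← Category.assoc, hγf, Category.assoc, IsIso.inv_hom_id, Category.comp_id]
      have hisoh : IsIso (γ ≫ (𝟙 P - δ)) := hmin _ hhf
      have hsec : (inv (γ ≫ (𝟙 P - δ)) ≫ γ) ≫ (𝟙 P - δ) = 𝟙 P := by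
        rw [Category.assoc]
        exact IsIso.inv_hom_id _
      have hisosub : IsIso (𝟙 P - δ) :=
        aux_isIso_of_split_epi_endo k (hfin P P) _ _ hsec
      have hzero' : (ι ≫ g) ≫ (𝟙 P - δ) = 0 := by
        rw [Preadditive.comp_sub, Category.comp_id, hιgδ, sub_self]
      have hιg0 : ι ≫ g = 0 := by
        rw [← cancel_mono (𝟙 P - δ), hzero', zero_comp]
      have hmιg : Mono (ι ≫ g) := by
        have hmι : Mono ι := by
          have : Mono (ι ≫ p) := by rw [hιp]; infer_instance
          exact mono_of_mono ι p
        exact mono_comp ι g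
      have hB0 : 𝟙 B = (0 : B ⟶ B) := by
        rw [← cancel_mono (ι ≫ g), Category.id_comp, zero_comp, hιg0]
      exact aux_not_isZero_of_local hloc ((IsZero.iff_id_eq_zero B).2 hB0)
  by_cases hz : IsZero ΩA
  · exact hzeroY _ hz
  · obtain ⟨n, f0, hloc, ⟨e⟩⟩ := hKS ΩA hz
    have hY_each : ∀ i, Y (f0 i) := fun i =>
      key (f0 i) (biproduct.ι f0 i ≫ e.inv) (e.hom ≫ biproduct.π f0 i)
        (by simp) (hloc i)
    exact hcp.subcatY.of_iso e.symm
      (aux_subcat_biproduct hcp.subcatY hzeroY n f0 hY_each)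
end
end

section
/- Let M be a subcategory of C containing all projective objects and satisfying Ext¹(M, M') = 0 for all M, M' ∈ M. Suppose an object Y admits a short exact sequence 0 → ΩY → P → Y → 0 with P projective, and ΩY admits a short exact sequence 0 → ΩY → M¹ → M² → 0 with M¹, M² ∈ M. Then there exists a short exact sequence 0 → M¹ → M² ⊕ P → Y → 0; in particular Y ∈ Cone(M, M). -/
open CategoryTheory CategoryTheory.Limits Opposite

attribute [local instance] CategoryTheory.Limits.HasFiniteBiproducts.of_hasFiniteProducts

noncomputable section

universe v u

variable {C : Type u} [Category.{v} C] [Abelian C]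

section AuxBridge

variable (k : Type*) [Field k] [Linear k C] [EnoughProjectives C]

/-- If `Ext¹(X, Z) = 0`, then every short exact sequence `0 ⟶ Z ⟶ E ⟶ X ⟶ 0`
admits a retraction of its first map. -/
lemma retraction_of_extVanishes_s10 {X Z E : C} (hv : extVanishes k 1 X Z)
    (f : Z ⟶ E) (q : E ⟶ X) (hses : IsSES f q) : ∃ ρ : E ⟶ Z, f ≫ ρ = 𝟙 Z := by
  obtain ⟨w, hS⟩ := hses
  haveI : Mono f := hS.mono_f
  haveI : Epi q := hS.epi_g
  let P : ProjectiveResolution X := ProjectiveResolution.of X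
  haveI : Projective (P.complex.X 0) := P.projective 0
  -- lift π through q
  let l : P.complex.X 0 ⟶ E := Projective.factorThru (X := X) (P.π.f 0) q
  have hl : l ≫ q = P.π.f 0 := Projective.factorThru_comp (X := X) _ _
  -- the cocycle c : P₁ ⟶ Z
  have h1 : (P.complex.d 1 0 ≫ l) ≫ q = 0 := by
    rw [Category.assoc, hl]
    exact P.complex_d_comp_π_f_zero
  let c : P.complex.X 1 ⟶ Z := hS.exact.lift (P.complex.d 1 0 ≫ l) h1
  have hcf : c ≫ f = P.complex.d 1 0 ≫ l := hS.exact.lift_f _ _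
  have hc2 : P.complex.d 2 1 ≫ c = 0 := by
    rw [← cancel_mono f, Category.assoc, hcf, zero_comp,
      HomologicalComplex.d_comp_d_assoc, zero_comp]
  -- homology vanishing gives a coboundary
  let L := P.complex.linearYonedaObj k Z
  have hz : IsZero (L.homology 1) := IsZero.of_iso hv (P.isoExt 1 Z).symm
  have hex : (L.sc' 0 1 2).Exact := by
    rw [← L.exactAt_iff' 0 1 2 (by simp) (by simp),
      L.exactAt_iff_isZero_homology]
    exact hz
  rw [ShortComplex.moduleCat_exact_iff] at hex
  obtain ⟨r, hr⟩ := hex c (by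
    show (L.d 1 2) c = 0
    exact hc2)
  change P.complex.X 0 ⟶ Z at r
  replace hr : P.complex.d 1 0 ≫ (r : P.complex.X 0 ⟶ Z) = c := by
    exact hr
  -- the section of q
  let φ : P.complex.X 0 ⟶ E := l - (r : P.complex.X 0 ⟶ Z) ≫ f
  have hφ : P.complex.d 1 0 ≫ φ = 0 := by
    simp only [φ, Preadditive.comp_sub, ← Category.assoc, hr]
    rw [hcf, sub_self]
  let s : X ⟶ E := P.isColimitCokernelCofork.desc (CokernelCofork.ofπ φ hφ)
  have hs : P.π.f 0 ≫ s = φ :=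
    Cofork.IsColimit.π_desc P.isColimitCokernelCofork
  have hsq : s ≫ q = 𝟙 X := by
    rw [← @cancel_epi _ _ _ X _ (P.π.f 0) (inferInstanceAs (Epi (P.π.f 0)))]
    refine (Category.assoc _ _ _).symm.trans ?_
    erw [hs]
    simp only [φ, Preadditive.sub_comp, Category.assoc, w, comp_zero, hl,
      sub_zero, Category.comp_id]
    exact (sub_zero _).trans (Category.comp_id (Y := X) _).symm
  -- turn the section into a retraction
  have hk : (𝟙 E - q ≫ s) ≫ q = 0 := by
    simp [Preadditive.sub_comp, Category.assoc, hsq]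
  refine ⟨hS.exact.lift (𝟙 E - q ≫ s) hk, ?_⟩
  have h := hS.exact.lift_f (𝟙 E - q ≫ s) hk
  rw [← cancel_mono f, Category.assoc, h, Preadditive.comp_sub,
    Category.comp_id, Category.id_comp, ← Category.assoc, w, zero_comp, sub_zero]

end AuxBridge

theorem stmt10 (k : Type*) [Field k] [Linear k C]
    [EnoughProjectives C] [EnoughInjectives C]
    (hKS : IsKrullSchmidt C) (hfin : ∀ X Y : C, Module.Finite k (X ⟶ Y))
    (M : C → Prop) (hsub : IsAdditiveSubcat M)
    (hproj : ∀ P : C, Projective P → M P)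
    (hrigid : ∀ ⦃X Z : C⦄, M X → M Z → extVanishes k 1 X Z)
    {Y ΩY P M₁ M₂ : C} (g : ΩY ⟶ P) (p : P ⟶ Y) (hses₁ : IsSES g p)
    (hP : Projective P)
    (u : ΩY ⟶ M₁) (v : M₁ ⟶ M₂) (hses₂ : IsSES u v) (hM₁ : M M₁) (hM₂ : M M₂) :
    (∃ (a : M₁ ⟶ M₂ ⊞ P) (b : M₂ ⊞ P ⟶ Y), IsSES a b) ∧ MemCone M M Y := by
  classical
  obtain ⟨w₁, hS₁⟩ := hses₁
  obtain ⟨w₂, hS₂⟩ := hses₂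
  haveI : Mono g := hS₁.mono_f
  haveI : Epi p := hS₁.epi_g
  haveI : Mono u := hS₂.mono_f
  haveI : Epi v := hS₂.epi_g
  -- Step 1: the pushout E of u and g, with its short exact sequence 0 → P → E → M₂ → 0
  let E := pushout u g
  let inl : M₁ ⟶ E := pushout.inl u g
  let inr : P ⟶ E := pushout.inr u g
  have hcomm : u ≫ inl = g ≫ inr := pushout.condition
  haveI : Mono inr := Abelian.mono_pushout_of_mono_f u g
  let m : E ⟶ M₂ := pushout.desc v 0 (by rw [w₂, comp_zero])
  have hinlm : inl ≫ m = v := pushout.inl_desc _ _ _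
  have hinrm : inr ≫ m = 0 := pushout.inr_desc _ _ _
  haveI : Epi m := by
    have : Epi (inl ≫ m) := by rw [hinlm]; infer_instance
    exact epi_of_epi inl m
  -- m is the cokernel of inr
  have hcoker : IsColimit (CokernelCofork.ofπ m hinrm) := by
    refine Cofork.IsColimit.mk _
      (fun s => hS₂.exact.desc (inl ≫ s.π) ?_) (fun s => ?_) (fun s t ht => ?_)
    · rw [← Category.assoc, hcomm, Category.assoc, CokernelCofork.condition s,
        comp_zero]
    · apply pushout.hom_ext
      · rw [← Category.assoc]
        show (inl ≫ m) ≫ _ = _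
        rw [hinlm]
        exact hS₂.exact.g_desc _ _
      · rw [← Category.assoc]
        show (inr ≫ m) ≫ _ = _
        rw [hinrm, zero_comp, CokernelCofork.condition s]
    · have ht' : m ≫ t = s.π := ht
      rw [← cancel_epi m, ht']
      symm
      apply pushout.hom_ext
      · rw [← Category.assoc]
        show (inl ≫ m) ≫ _ = _
        rw [hinlm]
        exact hS₂.exact.g_desc _ _
      · rw [← Category.assoc]
        show (inr ≫ m) ≫ _ = _
        rw [hinrm, zero_comp, CokernelCofork.condition s]
  have hS₃ : (ShortComplex.mk inr m hinrm).ShortExact :=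
    ShortComplex.ShortExact.mk (ShortComplex.exact_of_g_is_cokernel _ hcoker)
  -- Step 2: the sequence splits since Ext¹(M₂, P) = 0, giving t : M₁ ⟶ P with u ≫ t = g
  obtain ⟨ρ, hρ⟩ := retraction_of_extVanishes_s10 k (hrigid hM₂ (hproj P hP)) inr m
    ⟨hinrm, hS₃⟩
  let t : M₁ ⟶ P := inl ≫ ρ
  have hut : u ≫ t = g := by
    show u ≫ inl ≫ ρ = g
    rw [← Category.assoc, hcomm, Category.assoc, hρ, Category.comp_id]
  -- Step 3: the map w' : M₂ ⟶ Y and the pushout square (v, t, w', p)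
  have htp : u ≫ t ≫ p = 0 := by rw [← Category.assoc, hut, w₁]
  let w' : M₂ ⟶ Y := hS₂.exact.desc (t ≫ p) htp
  have hvw : v ≫ w' = t ≫ p := hS₂.exact.g_desc _ _
  have hPO : IsPushout v t w' p := by
    apply IsPushout.of_isColimit (c := PushoutCocone.mk w' p hvw)
    refine PushoutCocone.IsColimit.mk hvw
      (fun s => hS₁.exact.desc s.inr ?_) (fun s => ?_) (fun s => ?_)
      (fun s h h₁ h₂ => ?_)
    · show g ≫ s.inr = 0
      rw [← hut, Category.assoc, ← s.condition, ← Category.assoc, w₂, zero_comp]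
    · rw [← cancel_epi v, ← Category.assoc, hvw, Category.assoc,
        hS₁.exact.g_desc, s.condition]
    · exact hS₁.exact.g_desc _ _
    · rw [← cancel_epi p, h₂, hS₁.exact.g_desc]
  -- Step 4: the induced short exact sequence 0 → M₁ → M₂ ⊞ P → Y → 0
  let a : M₁ ⟶ M₂ ⊞ P := biprod.lift v (-t)
  let b : M₂ ⊞ P ⟶ Y := biprod.desc w' p
  have hab : a ≫ b = 0 := by
    simp [a, b, hvw]
  have hbcoker : IsColimit (CokernelCofork.ofπ b hab) :=
    hPO.isColimitCokernelCofork
  haveI : Mono a := by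
    apply Preadditive.mono_of_cancel_zero
    intro W x hx
    have hxv : x ≫ v = 0 := by
      have := hx =≫ biprod.fst
      simpa [a] using this
    have hxt : x ≫ t = 0 := by
      have := hx =≫ biprod.snd
      simp only [a, zero_comp, Category.assoc, biprod.lift_snd,
        Preadditive.comp_neg, neg_eq_zero] at this
      exact this
    let y : W ⟶ ΩY := hS₂.exact.lift x hxv
    have hy : y ≫ u = x := hS₂.exact.lift_f _ _
    have hyg : y ≫ g = 0 := by
      rw [← hut, ← Category.assoc, hy, hxt]
    have hy0 : y = 0 := by
      rw [← cancel_mono g, hyg, zero_comp]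
    rw [← hy, hy0, zero_comp]
  haveI : Epi b := by
    have : Epi (biprod.inr ≫ b) := by
      simp only [b, biprod.inr_desc]; infer_instance
    exact epi_of_epi biprod.inr b
  have hSES : (ShortComplex.mk a b hab).ShortExact :=
    ShortComplex.ShortExact.mk (ShortComplex.exact_of_g_is_cokernel _ hbcoker)
  refine ⟨⟨a, b, hab, hSES⟩, M₁, M₂ ⊞ P, a, b, hM₁, hsub.sum_mem hM₂ (hproj P hP),
    hab, hSES⟩
end
end
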